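/- arXiv:2603.02334 — 3 statements merged into one kernel-verified Lean document; each statement's English description precedes it below -/
import Mathlib

section
/- Let Ψ and Φ be orthogonal quantum Latin squares of order 6 in standard form. If some entry Ψ_{ij} of Ψ has weight 3, then every entry Φ_{kj} of Φ in the same column j has weight at most 2. -/
noncomputable section

/-- A quantum Latin square of order `n`: an `n × n` matrix of vectors in `ℂ^n`
such that every row and every column is an orthonormal family. -/
def IsQLS {n : ℕ} (Ψ : Fin n → Fin n → EuclideanSpace ℂ (Fin n)) : Prop :=
  (∀ i, Orthonormal ℂ (fun j => Ψ i j)) ∧ (∀ j, Orthonormal ℂ (fun i => Ψ i j))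

/-- Two quantum Latin squares are orthogonal: for distinct cells `(i,j) ≠ (k,l)`,
`⟨Ψ_{ij}, Ψ_{kl}⟩ · ⟨Φ_{ij}, Φ_{kl}⟩ = 0`; equivalently, the `n²` vectors
`Ψ_{ij} ⊗ Φ_{ij}` form an orthonormal basis of `ℂ^n ⊗ ℂ^n`. -/
def OrthQLS {n : ℕ} (Ψ Φ : Fin n → Fin n → EuclideanSpace ℂ (Fin n)) : Prop :=
  ∀ i j k l, (i, j) ≠ (k, l) →
    (inner ℂ (Ψ i j) (Ψ k l) : ℂ) * (inner ℂ (Φ i j) (Φ k l) : ℂ) = 0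

/-- The weight of a vector in `ℂ^n`: the number of nonzero coordinates. -/
def weight {n : ℕ} (v : EuclideanSpace ℂ (Fin n)) : ℕ :=
  (Finset.univ.filter fun k => v k ≠ 0).card

/-- A quantum Latin square of order 6 is in standard form if its first row is
`(e₁, …, e₆)`, the standard basis vectors in order. -/
def StdForm (Ψ : Fin 6 → Fin 6 → EuclideanSpace ℂ (Fin 6)) : Prop :=
  ∀ j, Ψ 0 j = EuclideanSpace.single j (1 : ℂ)

abbrev ES := EuclideanSpace ℂ (Fin 6)

/-- support of a vector -/
def supp (v : ES) : Finset (Fin 6) := Finset.univ.filter fun k => v k ≠ 0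

lemma mem_supp {v : ES} {t : Fin 6} : t ∈ supp v ↔ v t ≠ 0 := by
  simp [supp]

lemma inner_eq_sum (x y : ES) : (inner ℂ x y : ℂ) = ∑ t, (starRingEnd ℂ) (x t) * y t := by
  simp [PiLp.inner_apply, RCLike.inner_apply]
  exact Finset.sum_congr rfl fun _ _ => mul_comm _ _

lemma inner_single_right (x : ES) (t : Fin 6) :
    (inner ℂ x (EuclideanSpace.single t (1:ℂ)) : ℂ) = (starRingEnd ℂ) (x t) := by
  rw [inner_eq_sum]
  rw [Finset.sum_eq_single t]
  · simp [EuclideanSpace.single_apply]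
  · intro s _ hs; simp [EuclideanSpace.single_apply, hs]
  · simp

lemma inner_single_left (x : ES) (t : Fin 6) :
    (inner ℂ (EuclideanSpace.single t (1:ℂ)) x : ℂ) = x t := by
  rw [inner_eq_sum]
  rw [Finset.sum_eq_single t]
  · simp [EuclideanSpace.single_apply]
  · intro s _ hs; simp [EuclideanSpace.single_apply, hs]
  · simp

/-- orthogonal vectors cannot have supports meeting in exactly one point -/
lemma orth_card_ne_one {x y : ES} (h : (inner ℂ x y : ℂ) = 0) :
    (supp x ∩ supp y).card ≠ 1 := by
  intro h1
  obtain ⟨t, ht⟩ := Finset.card_eq_one.mp h1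
  have hx : x t ≠ 0 := by
    have : t ∈ supp x ∩ supp y := ht ▸ Finset.mem_singleton_self t
    exact mem_supp.mp (Finset.mem_inter.mp this).1
  have hy : y t ≠ 0 := by
    have : t ∈ supp x ∩ supp y := ht ▸ Finset.mem_singleton_self t
    exact mem_supp.mp (Finset.mem_inter.mp this).2
  have hsum : (inner ℂ x y : ℂ) = ∑ s ∈ supp x ∩ supp y, (starRingEnd ℂ) (x s) * y s := by
    rw [inner_eq_sum]
    refine (Finset.sum_subset (Finset.subset_univ _) ?_).symm
    intro s _ hs
    rcases not_and_or.mp (fun hc : x s ≠ 0 ∧ y s ≠ 0 =>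
      hs (Finset.mem_inter.mpr ⟨mem_supp.mpr hc.1, mem_supp.mpr hc.2⟩)) with h' | h'
    · simp [not_not.mp h']
    · simp [not_not.mp h']
  rw [ht, Finset.sum_singleton] at hsum
  rw [h] at hsum
  exact (mul_ne_zero (by simpa using hx) hy) hsum.symm

/-- Hall-type bound: an orthonormal family has at most `|P|` members supported in `P`. -/
lemma hall_bound {ι : Type} [Fintype ι] [DecidableEq ι] {w : ι → ES}
    (hw : Orthonormal ℂ w) (P : Finset (Fin 6)) :
    (Finset.univ.filter fun k => supp (w k) ⊆ P).card ≤ P.card := by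
  classical
  set F := Finset.univ.filter fun k => supp (w k) ⊆ P with hF
  set VP : Submodule ℂ ES :=
    Submodule.span ℂ (Set.range fun t : {t // t ∈ P} => (EuclideanSpace.single t.1 (1:ℂ) : ES))
    with hVP
  have hmem : ∀ k ∈ F, w k ∈ VP := by
    intro k hk
    have hsupp : supp (w k) ⊆ P := (Finset.mem_filter.mp hk).2
    have hrepr : w k = ∑ t ∈ P, w k t • (EuclideanSpace.single t (1:ℂ) : ES) := by
      refine PiLp.ext fun s => ?_
      have : (∑ t ∈ P, w k t • (EuclideanSpace.single t (1:ℂ) : ES)) s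
          = ∑ t ∈ P, w k t * (if s = t then 1 else 0) := by
        rw [WithLp.ofLp_sum, Finset.sum_apply]
        refine Finset.sum_congr rfl fun t _ => ?_
        simp [EuclideanSpace.single_apply]
      rw [this]
      rw [Finset.sum_eq_single s]
      · by_cases hsP : s ∈ P
        · simp
        · have : w k s = 0 := by
            by_contra hne
            exact hsP (hsupp (mem_supp.mpr hne))
          simp [this]
      · intro t _ hts; simp [Ne.symm hts]
      · intro hsP
        have : w k s = 0 := by
          by_contra hne
          exact hsP (hsupp (mem_supp.mpr hne))
        simp [this]
    rw [hrepr]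
    refine Submodule.sum_mem _ fun t ht => Submodule.smul_mem _ _ ?_
    exact Submodule.subset_span ⟨⟨t, ht⟩, rfl⟩
  have hrank : Module.finrank ℂ VP ≤ P.card := by
    refine le_trans (finrank_span_le_card _) ?_
    rw [Set.toFinset_range]
    refine le_trans (Finset.card_image_le) ?_
    simp
  have hli : LinearIndependent ℂ (fun k : {k // k ∈ F} => w k.1) :=
    hw.linearIndependent.comp _ Subtype.val_injective
  let g : {k // k ∈ F} → VP := fun k => ⟨w k.1, hmem k.1 k.2⟩
  have hlig : LinearIndependent ℂ g := by
    apply LinearIndependent.of_comp VP.subtype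
    exact hli
  have := hlig.fintype_card_le_finrank
  rw [Fintype.card_coe] at this
  exact le_trans this hrank


/-- "c7": in an orthonormal basis (6 vectors in ℂ⁶), if all members but one vanish at a
coordinate `t`, then the remaining one has support exactly `{t}`. -/
lemma c7_lemma {b : Fin 6 → ES} (hb : Orthonormal ℂ b) (t : Fin 6) (k0 : Fin 6)
    (hz : ∀ l, l ≠ k0 → b l t = 0) : supp (b k0) = {t} := by
  have hspan : ⊤ ≤ Submodule.span ℂ (Set.range b) := by
    rw [hb.linearIndependent.span_eq_top_of_card_eq_finrank] <;>
      simp [finrank_euclideanSpace_fin]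
  let ob : OrthonormalBasis (Fin 6) ℂ ES := OrthonormalBasis.mk hb hspan
  have hob : ∀ l, ob l = b l := fun l => by simp [ob]
  have hpars := ob.sum_inner_mul_inner (EuclideanSpace.single t (1:ℂ))
      (EuclideanSpace.single t (1:ℂ))
  have hterm : ∀ l, (inner ℂ (EuclideanSpace.single t (1:ℂ)) (ob l) : ℂ) *
      (inner ℂ (ob l) (EuclideanSpace.single t (1:ℂ)) : ℂ)
      = (Complex.normSq (b l t) : ℂ) := by
    intro l
    rw [hob, inner_single_left, inner_single_right, Complex.mul_conj]
  have hrhs : (inner ℂ (EuclideanSpace.single t (1:ℂ)) (EuclideanSpace.single t (1:ℂ)) : ℂ) = 1 := by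
    rw [inner_single_left]; simp [EuclideanSpace.single_apply]
  rw [hrhs] at hpars
  have hsum1 : ∑ l, (Complex.normSq (b l t) : ℂ) = 1 := by
    rw [← hpars]; exact Finset.sum_congr rfl fun l _ => (hterm l).symm
  have hmain : Complex.normSq (b k0 t) = 1 := by
    rw [Finset.sum_eq_single k0] at hsum1
    · exact_mod_cast hsum1
    · intro l _ hl; simp [hz l hl]
    · simp
  -- now use that ‖b k0‖ = 1 to kill other coordinates
  have hnorm : (inner ℂ (b k0) (b k0) : ℂ) = 1 := by
    have h1 : ‖b k0‖ = 1 := hb.1 k0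
    rw [@inner_self_eq_norm_sq_to_K ℂ, h1]; norm_num
  have hsum2 : ∑ s, Complex.normSq (b k0 s) = 1 := by
    have : ∑ s, (Complex.normSq (b k0 s) : ℂ) = 1 := by
      rw [← hnorm, inner_eq_sum]
      exact Finset.sum_congr rfl fun s _ => by rw [Complex.normSq_eq_conj_mul_self]
    exact_mod_cast this
  have hzero : ∀ s, s ≠ t → Complex.normSq (b k0 s) = 0 := by
    have hrest : ∑ s ∈ Finset.univ.erase t, Complex.normSq (b k0 s) = 0 := by
      have := Finset.add_sum_erase Finset.univ (fun s => Complex.normSq (b k0 s))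
        (Finset.mem_univ t)
      simp only [] at this
      rw [hmain] at this
      rw [← this] at hsum2
      linarith
    intro s hs
    have hsmem : s ∈ Finset.univ.erase t := Finset.mem_erase.mpr ⟨hs, Finset.mem_univ s⟩
    have := (Finset.sum_eq_zero_iff_of_nonneg fun i _ => Complex.normSq_nonneg _).mp hrest
    exact this s hsmem
  ext s
  simp only [mem_supp, Finset.mem_singleton]
  constructor
  · intro hns
    by_contra hst
    exact hns (Complex.normSq_eq_zero.mp (hzero s hst))
  · intro hst
    rw [hst]
    intro h0
    rw [h0] at hmain
    simpa using hmain

namespace QLSCore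

variable {α ι : Type} [DecidableEq α] [DecidableEq ι] [Fintype ι]

lemma empty_of_subset_singleton {s : Finset α} {a : α} (h : s ⊆ {a}) (hc : s.card ≠ 1) :
    s = ∅ := by
  rcases Finset.subset_singleton_iff.mp h with h' | h'
  · exact h'
  · exact absurd (by rw [h']; simp) hc

lemma eq_singleton_of_subset {s : Finset α} {a : α} (h : s ⊆ {a}) (hne : s.Nonempty) :
    s = {a} := by
  rcases Finset.subset_singleton_iff.mp h with h' | h'
  · exact absurd h' hne.ne_empty
  · exact h'

lemma not_mem_of_inter_card_ne_one {s : Finset α} {t : α} (h : (s ∩ {t}).card ≠ 1) :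
    t ∉ s := by
  intro hts
  apply h
  have : s ∩ {t} = {t} := by
    apply Finset.Subset.antisymm Finset.inter_subset_right
    intro x hx
    rcases Finset.mem_singleton.mp hx with rfl
    exact Finset.mem_inter.mpr ⟨hts, Finset.mem_singleton_self _⟩
  rw [this, Finset.card_singleton]

lemma pair_other {u : Finset α} (hc : u.card = 2) {t : α} (ht : t ∈ u) :
    ∃ s, s ≠ t ∧ u = {t, s} := by
  obtain ⟨x, y, hxy, rfl⟩ := Finset.card_eq_two.mp hc
  rcases Finset.mem_insert.mp ht with rfl | h
  · exact ⟨y, hxy.symm, rfl⟩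
  · rcases Finset.mem_singleton.mp h with rfl
    exact ⟨x, hxy, Finset.pair_comm x t⟩

lemma three_sets_bound {C : ι → Finset α}
    (hall : ∀ P : Finset α, (Finset.univ.filter fun k => C k ⊆ P).card ≤ P.card)
    {P : Finset α} (hP : P.card ≤ 2) {r1 r2 r3 : ι}
    (h12 : r1 ≠ r2) (h13 : r1 ≠ r3) (h23 : r2 ≠ r3)
    (hc1 : C r1 ⊆ P) (hc2 : C r2 ⊆ P) (hc3 : C r3 ⊆ P) : False := by
  have hsub : ({r1, r2, r3} : Finset ι) ⊆ Finset.univ.filter fun k => C k ⊆ P := by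
    intro x hx
    simp only [Finset.mem_insert, Finset.mem_singleton] at hx
    rcases hx with rfl | rfl | rfl <;> simp [hc1, hc2, hc3]
  have hcard : ({r1, r2, r3} : Finset ι).card = 3 := by
    rw [Finset.card_insert_of_notMem (by simp [h12, h13]),
      Finset.card_insert_of_notMem (by simp [h23]), Finset.card_singleton]
  have := le_trans (le_trans (le_of_eq hcard.symm) (Finset.card_le_card hsub)) (hall P)
  omega

lemma four_sets_bound {C : ι → Finset α}
    (hall : ∀ P : Finset α, (Finset.univ.filter fun k => C k ⊆ P).card ≤ P.card)
    {P : Finset α} (hP : P.card ≤ 3) {r1 r2 r3 r4 : ι}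
    (h12 : r1 ≠ r2) (h13 : r1 ≠ r3) (h14 : r1 ≠ r4)
    (h23 : r2 ≠ r3) (h24 : r2 ≠ r4) (h34 : r3 ≠ r4)
    (hc1 : C r1 ⊆ P) (hc2 : C r2 ⊆ P) (hc3 : C r3 ⊆ P) (hc4 : C r4 ⊆ P) : False := by
  have hsub : ({r1, r2, r3, r4} : Finset ι) ⊆ Finset.univ.filter fun k => C k ⊆ P := by
    intro x hx
    simp only [Finset.mem_insert, Finset.mem_singleton] at hx
    rcases hx with rfl | rfl | rfl | rfl <;> simp [hc1, hc2, hc3, hc4]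
  have hcard : ({r1, r2, r3, r4} : Finset ι).card = 4 := by
    rw [Finset.card_insert_of_notMem (by simp [h12, h13, h14]),
      Finset.card_insert_of_notMem (by simp [h23, h24]),
      Finset.card_insert_of_notMem (by simp [h34]), Finset.card_singleton]
  have := le_trans (le_trans (le_of_eq hcard.symm) (Finset.card_le_card hsub)) (hall P)
  omega

set_option maxHeartbeats 1000000 in
theorem core (hι : Fintype.card ι = 5) (T : Finset α) (hT : T.card = 5)
    (A B : ι → Finset α) (i₀ m₀ : ι) (him : i₀ ≠ m₀)
    (hAT : ∀ k, A k ⊆ T) (hBT : ∀ k, B k ⊆ T)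
    (hAne : ∀ k, (A k).Nonempty) (hBne : ∀ k, (B k).Nonempty)
    (hdisj : ∀ k, Disjoint (A k) (B k))
    (hoA : ∀ k l, k ≠ l → ((A k ∩ A l).card ≠ 1))
    (hoB : ∀ k l, k ≠ l → ((B k ∩ B l).card ≠ 1))
    (hc7A : ∀ t ∈ T, ∀ k : ι, (∀ l, l ≠ k → t ∉ A l) → A k = {t})
    (hc7B : ∀ t ∈ T, ∀ k : ι, (∀ l, l ≠ k → t ∉ B l) → B k = {t})
    (hallA : ∀ P : Finset α, (Finset.univ.filter fun k => A k ⊆ P).card ≤ P.card)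
    (hallB : ∀ P : Finset α, (Finset.univ.filter fun k => B k ⊆ P).card ≤ P.card)
    (hS : (A i₀).card = 3) (hW : 3 ≤ (B m₀).card) : False := by
  classical
  -- basic disjointness card bound
  have hsum : ∀ k, (A k).card + (B k).card ≤ 5 := by
    intro k
    have h1 : A k ∪ B k ⊆ T := Finset.union_subset (hAT k) (hBT k)
    have h2 := Finset.card_union_of_disjoint (hdisj k)
    have := Finset.card_le_card h1
    rw [h2, hT] at this
    exact this
  have hW4 : (B m₀).card ≤ 4 := by
    have := hsum m₀
    have := Finset.card_pos.mpr (hAne m₀)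
    omega
  -- get the three other indices
  have hRcard : ((Finset.univ.erase m₀).erase i₀).card = 3 := by
    rw [Finset.card_erase_of_mem (Finset.mem_erase.mpr ⟨him, Finset.mem_univ _⟩),
      Finset.card_erase_of_mem (Finset.mem_univ _), Finset.card_univ, hι]
  obtain ⟨k1, k2, k3, h12, h13, h23, hR⟩ := Finset.card_eq_three.mp hRcard
  have hmem : ∀ x ∈ ({k1, k2, k3} : Finset ι), x ≠ i₀ ∧ x ≠ m₀ := by
    intro x hx
    have : x ∈ (Finset.univ.erase m₀).erase i₀ := by rw [hR]; exact hx
    exact ⟨(Finset.mem_erase.mp this).1,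
      (Finset.mem_erase.mp (Finset.mem_erase.mp this).2).1⟩
  have hk1 := hmem k1 (by simp); have hk2 := hmem k2 (by simp); have hk3 := hmem k3 (by simp)
  have hcover : ∀ x : ι, x = i₀ ∨ x = m₀ ∨ x = k1 ∨ x = k2 ∨ x = k3 := by
    intro x
    by_cases hx1 : x = i₀; · tauto
    by_cases hx2 : x = m₀; · tauto
    have : x ∈ (Finset.univ.erase m₀).erase i₀ :=
      Finset.mem_erase.mpr ⟨hx1, Finset.mem_erase.mpr ⟨hx2, Finset.mem_univ _⟩⟩
    rw [hR] at this
    simp only [Finset.mem_insert, Finset.mem_singleton] at this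
    tauto
  have hcover132 : ∀ x : ι, x = i₀ ∨ x = m₀ ∨ x = k1 ∨ x = k3 ∨ x = k2 := by
    intro x
    rcases hcover x with h|h|h|h|h
    exacts [Or.inl h, Or.inr (Or.inl h), Or.inr (Or.inr (Or.inl h)),
      Or.inr (Or.inr (Or.inr (Or.inr h))), Or.inr (Or.inr (Or.inr (Or.inl h)))]
  have hcover231 : ∀ x : ι, x = i₀ ∨ x = m₀ ∨ x = k2 ∨ x = k3 ∨ x = k1 := by
    intro x
    rcases hcover x with h|h|h|h|h
    exacts [Or.inl h, Or.inr (Or.inl h), Or.inr (Or.inr (Or.inr (Or.inr h))),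
      Or.inr (Or.inr (Or.inl h)), Or.inr (Or.inr (Or.inr (Or.inl h)))]
  have hcover312 : ∀ x : ι, x = i₀ ∨ x = m₀ ∨ x = k3 ∨ x = k1 ∨ x = k2 := by
    intro x
    rcases hcover x with h|h|h|h|h
    exacts [Or.inl h, Or.inr (Or.inl h), Or.inr (Or.inr (Or.inr (Or.inl h))),
      Or.inr (Or.inr (Or.inr (Or.inr h))), Or.inr (Or.inr (Or.inl h))]
  have hcover213 : ∀ x : ι, x = i₀ ∨ x = m₀ ∨ x = k2 ∨ x = k1 ∨ x = k3 := by
    intro x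
    rcases hcover x with h|h|h|h|h
    exacts [Or.inl h, Or.inr (Or.inl h), Or.inr (Or.inr (Or.inr (Or.inl h))),
      Or.inr (Or.inr (Or.inl h)), Or.inr (Or.inr (Or.inr (Or.inr h)))]
  have hWle : (B m₀).card = 3 ∨ (B m₀).card = 4 := by omega
  rcases hWle with hb3 | hb4
  · -- ═══════════ CASE |W| = 3 ═══════════
    have hcS : (T \ A i₀).card = 2 := by rw [Finset.card_sdiff_of_subset (hAT i₀), hT, hS]
    have hcW : (T \ B m₀).card = 2 := by rw [Finset.card_sdiff_of_subset (hBT m₀), hT, hb3]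
    have hAmsub : A m₀ ⊆ T \ B m₀ := fun x hx =>
      Finset.mem_sdiff.mpr ⟨hAT m₀ hx, Finset.disjoint_left.mp (hdisj m₀) hx⟩
    have hBisub : B i₀ ⊆ T \ A i₀ := fun x hx =>
      Finset.mem_sdiff.mpr ⟨hBT i₀ hx, Finset.disjoint_right.mp (hdisj i₀) hx⟩
    have hrange : 1 ≤ (A i₀ ∩ B m₀).card ∧ (A i₀ ∩ B m₀).card ≤ 3 := by
      have h1 := Finset.card_union_add_card_inter (A i₀) (B m₀)
      have h2 : (A i₀ ∪ B m₀).card ≤ 5 :=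
        hT ▸ Finset.card_le_card (Finset.union_subset (hAT i₀) (hBT m₀))
      have h3 : (A i₀ ∩ B m₀).card ≤ 3 :=
        hS ▸ Finset.card_le_card Finset.inter_subset_left
      omega
    have hrval : (A i₀ ∩ B m₀).card = 1 ∨ (A i₀ ∩ B m₀).card = 2 ∨
        (A i₀ ∩ B m₀).card = 3 := by omega
    rcases hrval with hr1 | hr2 | hr3
    -- ─────────── subcase |S ∩ W| = 1 ───────────
    · obtain ⟨c, hcM⟩ := Finset.card_eq_one.mp hr1
      have hc : c ∈ A i₀ ∧ c ∈ B m₀ :=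
        Finset.mem_inter.mp (hcM ▸ Finset.mem_singleton_self c)
      have hTeq : A i₀ ∪ B m₀ = T := by
        apply Finset.eq_of_subset_of_card_le (Finset.union_subset (hAT i₀) (hBT m₀))
        have := Finset.card_union_add_card_inter (A i₀) (B m₀)
        omega
      have hPScard : (A i₀ \ B m₀).card = 2 := by
        have : A i₀ \ B m₀ = A i₀ \ (A i₀ ∩ B m₀) := by
          rw [Finset.sdiff_inter_self_left]
        rw [this, Finset.card_sdiff_of_subset Finset.inter_subset_left, hS, hr1]
      have hPWcard : (B m₀ \ A i₀).card = 2 := by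
        have : B m₀ \ A i₀ = B m₀ \ (B m₀ ∩ A i₀) := by
          rw [Finset.sdiff_inter_self_left]
        rw [this, Finset.card_sdiff_of_subset Finset.inter_subset_left, hb3, Finset.inter_comm, hr1]
      have hcPS : c ∉ A i₀ \ B m₀ := by simp [hc.2]
      have hcPW : c ∉ B m₀ \ A i₀ := by simp [hc.1]
      have hSchar : ∀ x, x ∈ A i₀ ↔ (x = c ∨ x ∈ A i₀ \ B m₀) := by
        intro x
        constructor
        · intro hx
          by_cases hxw : x ∈ B m₀
          · left
            have : x ∈ A i₀ ∩ B m₀ := Finset.mem_inter.mpr ⟨hx, hxw⟩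
            rw [hcM] at this
            exact Finset.mem_singleton.mp this
          · right; exact Finset.mem_sdiff.mpr ⟨hx, hxw⟩
        · rintro (rfl | hx)
          · exact hc.1
          · exact (Finset.mem_sdiff.mp hx).1
      have hWchar : ∀ x, x ∈ B m₀ ↔ (x = c ∨ x ∈ B m₀ \ A i₀) := by
        intro x
        constructor
        · intro hx
          by_cases hxs : x ∈ A i₀
          · left
            have : x ∈ A i₀ ∩ B m₀ := Finset.mem_inter.mpr ⟨hxs, hx⟩
            rw [hcM] at this
            exact Finset.mem_singleton.mp this
          · right; exact Finset.mem_sdiff.mpr ⟨hx, hxs⟩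
        · rintro (rfl | hx)
          · exact hc.2
          · exact (Finset.mem_sdiff.mp hx).1
      have hTchar : ∀ x, x ∈ T ↔ x ∈ A i₀ ∨ x ∈ B m₀ := by
        intro x
        rw [← hTeq]
        exact Finset.mem_union
      have hBiPW : B i₀ = B m₀ \ A i₀ := by
        have hsub : B i₀ ⊆ B m₀ \ A i₀ := by
          intro x hx
          rcases (hTchar x).mp (hBT i₀ hx) with h | h
          · exact absurd h (Finset.disjoint_right.mp (hdisj i₀) hx)
          · exact Finset.mem_sdiff.mpr ⟨h, Finset.disjoint_right.mp (hdisj i₀) hx⟩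
        apply Finset.eq_of_subset_of_card_le hsub
        have h1 := hoB i₀ m₀ him
        have h2 : B i₀ ∩ B m₀ = B i₀ :=
          Finset.inter_eq_left.mpr (fun x hx => (Finset.mem_sdiff.mp (hsub hx)).1)
        rw [h2] at h1
        have := Finset.card_pos.mpr (hBne i₀)
        omega
      have hAmPS : A m₀ = A i₀ \ B m₀ := by
        have hsub : A m₀ ⊆ A i₀ \ B m₀ := by
          intro x hx
          rcases (hTchar x).mp (hAT m₀ hx) with h | h
          · exact Finset.mem_sdiff.mpr ⟨h, Finset.disjoint_left.mp (hdisj m₀) hx⟩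
          · exact absurd h (Finset.disjoint_left.mp (hdisj m₀) hx)
        apply Finset.eq_of_subset_of_card_le hsub
        have h1 := hoA m₀ i₀ him.symm
        have h2 : A m₀ ∩ A i₀ = A m₀ :=
          Finset.inter_eq_left.mpr (fun x hx => (Finset.mem_sdiff.mp (hsub hx)).1)
        rw [h2] at h1
        have := Finset.card_pos.mpr (hAne m₀)
        omega
      have key : ∀ r, r ≠ i₀ → r ≠ m₀ →
          (A r ⊆ B m₀ \ A i₀ ∧ B r ⊆ A i₀ \ B m₀) ∨
          (A i₀ \ B m₀ ⊆ A r ∧ B m₀ \ A i₀ ⊆ B r) := by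
        intro r hri hrm
        have hoam := hoA r m₀ hrm
        rw [hAmPS] at hoam
        have hPSle : (A r ∩ (A i₀ \ B m₀)).card ≤ 2 :=
          le_trans (Finset.card_le_card Finset.inter_subset_right) (le_of_eq hPScard)
        have hobi := hoB r i₀ hri
        rw [hBiPW] at hobi
        have hPWle : (B r ∩ (B m₀ \ A i₀)).card ≤ 2 :=
          le_trans (Finset.card_le_card Finset.inter_subset_right) (le_of_eq hPWcard)
        have hBPW : (B r ∩ (B m₀ \ A i₀)).card = 0 ∨ B m₀ \ A i₀ ⊆ B r := by
          have : (B r ∩ (B m₀ \ A i₀)).card = 0 ∨ (B r ∩ (B m₀ \ A i₀)).card = 2 := by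
            omega
          rcases this with h | h
          · exact Or.inl h
          · right
            have : B r ∩ (B m₀ \ A i₀) = B m₀ \ A i₀ :=
              Finset.eq_of_subset_of_card_le Finset.inter_subset_right (by omega)
            rw [← this]
            exact Finset.inter_subset_left
        have : (A r ∩ (A i₀ \ B m₀)).card = 0 ∨ (A r ∩ (A i₀ \ B m₀)).card = 2 := by
          omega
        rcases this with h0 | h2
        · left
          have hcA : c ∉ A r := by
            have hsub : A r ∩ A i₀ ⊆ {c} := by
              intro x hx
              obtain ⟨hx1, hx2⟩ := Finset.mem_inter.mp hx
              rcases (hSchar x).mp hx2 with rfl | hx'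
              · simp
              · exfalso
                have : x ∈ A r ∩ (A i₀ \ B m₀) := Finset.mem_inter.mpr ⟨hx1, hx'⟩
                rw [Finset.card_eq_zero.mp h0] at this
                exact absurd this (Finset.notMem_empty x)
            have hemp := empty_of_subset_singleton hsub (hoA r i₀ hri)
            intro hx
            have : c ∈ A r ∩ A i₀ := Finset.mem_inter.mpr ⟨hx, hc.1⟩
            rw [hemp] at this; exact absurd this (Finset.notMem_empty c)
          have hArPW : A r ⊆ B m₀ \ A i₀ := by
            intro x hx
            have hxS : x ∉ A i₀ := by
              intro hxS
              rcases (hSchar x).mp hxS with rfl | hx'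
              · exact hcA hx
              · have : x ∈ A r ∩ (A i₀ \ B m₀) := Finset.mem_inter.mpr ⟨hx, hx'⟩
                rw [Finset.card_eq_zero.mp h0] at this
                exact absurd this (Finset.notMem_empty x)
            rcases (hTchar x).mp (hAT r hx) with h | h
            · exact absurd h hxS
            · exact Finset.mem_sdiff.mpr ⟨h, hxS⟩
          refine ⟨hArPW, ?_⟩
          have hnotPWB : ¬(B m₀ \ A i₀ ⊆ B r) := by
            intro hsub
            obtain ⟨x, hx⟩ := hAne r
            exact Finset.disjoint_left.mp (hdisj r) hx (hsub (hArPW hx))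
          rcases hBPW with h0' | h2'
          · have hcB : c ∉ B r := by
              have hsub : B r ∩ B m₀ ⊆ {c} := by
                intro x hx
                obtain ⟨hx1, hx2⟩ := Finset.mem_inter.mp hx
                rcases (hWchar x).mp hx2 with rfl | hx'
                · simp
                · exfalso
                  have : x ∈ B r ∩ (B m₀ \ A i₀) := Finset.mem_inter.mpr ⟨hx1, hx'⟩
                  rw [Finset.card_eq_zero.mp h0'] at this
                  exact absurd this (Finset.notMem_empty x)
              have hemp := empty_of_subset_singleton hsub (hoB r m₀ hrm)
              intro hx
              have : c ∈ B r ∩ B m₀ := Finset.mem_inter.mpr ⟨hx, hc.2⟩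
              rw [hemp] at this; exact absurd this (Finset.notMem_empty c)
            intro x hx
            rcases (hTchar x).mp (hBT r hx) with h | h
            · rcases (hSchar x).mp h with rfl | hx'
              · exact absurd hx hcB
              · exact hx'
            · rcases (hWchar x).mp h with rfl | hx'
              · exact absurd hx hcB
              · exfalso
                have : x ∈ B r ∩ (B m₀ \ A i₀) := Finset.mem_inter.mpr ⟨hx, hx'⟩
                rw [Finset.card_eq_zero.mp h0'] at this
                exact absurd this (Finset.notMem_empty x)
          · exact absurd h2' hnotPWB
        · right
          have hPSsub : A i₀ \ B m₀ ⊆ A r := by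
            have : A r ∩ (A i₀ \ B m₀) = A i₀ \ B m₀ :=
              Finset.eq_of_subset_of_card_le Finset.inter_subset_right (by omega)
            rw [← this]
            exact Finset.inter_subset_left
          refine ⟨hPSsub, ?_⟩
          rcases hBPW with h0' | h2'
          · exfalso
            have hBrPS : B r ∩ (A i₀ \ B m₀) = ∅ := by
              apply Finset.eq_empty_of_forall_notMem
              intro x hx
              obtain ⟨hx1, hx2⟩ := Finset.mem_inter.mp hx
              exact Finset.disjoint_left.mp (hdisj r) (hPSsub hx2) hx1
            have hcB : c ∉ B r := by
              have hsub : B r ∩ B m₀ ⊆ {c} := by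
                intro x hx
                obtain ⟨hx1, hx2⟩ := Finset.mem_inter.mp hx
                rcases (hWchar x).mp hx2 with rfl | hx'
                · simp
                · exfalso
                  have : x ∈ B r ∩ (B m₀ \ A i₀) := Finset.mem_inter.mpr ⟨hx1, hx'⟩
                  rw [Finset.card_eq_zero.mp h0'] at this
                  exact absurd this (Finset.notMem_empty x)
              have hemp := empty_of_subset_singleton hsub (hoB r m₀ hrm)
              intro hx
              have : c ∈ B r ∩ B m₀ := Finset.mem_inter.mpr ⟨hx, hc.2⟩
              rw [hemp] at this; exact absurd this (Finset.notMem_empty c)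
            obtain ⟨x, hx⟩ := hBne r
            rcases (hTchar x).mp (hBT r hx) with h | h
            · rcases (hSchar x).mp h with rfl | hx'
              · exact hcB hx
              · have : x ∈ B r ∩ (A i₀ \ B m₀) := Finset.mem_inter.mpr ⟨hx, hx'⟩
                rw [hBrPS] at this
                exact absurd this (Finset.notMem_empty x)
            · rcases (hWchar x).mp h with rfl | hx'
              · exact hcB hx
              · have : x ∈ B r ∩ (B m₀ \ A i₀) := Finset.mem_inter.mpr ⟨hx, hx'⟩
                rw [Finset.card_eq_zero.mp h0'] at this
                exact absurd this (Finset.notMem_empty x)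
          · exact h2'
      have noTwoX : ∀ r r', r ≠ r' → r ≠ i₀ → r ≠ m₀ → r' ≠ i₀ → r' ≠ m₀ →
          A i₀ \ B m₀ ⊆ A r → B m₀ \ A i₀ ⊆ B r →
          A i₀ \ B m₀ ⊆ A r' → B m₀ \ A i₀ ⊆ B r' → False := by
        intro r r' hrr hri hrm hr'i hr'm hXa hXb hXa' hXb'
        have hBrW : ∀ rr, rr ≠ i₀ → rr ≠ m₀ → A i₀ \ B m₀ ⊆ A rr → B rr ⊆ B m₀ := by
          intro rr hi hm hXsub x hx
          rcases (hTchar x).mp (hBT rr hx) with h | h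
          · rcases (hSchar x).mp h with rfl | hx'
            · exact hc.2
            · exact absurd hx (Finset.disjoint_left.mp (hdisj rr) (hXsub hx'))
          · exact h
        exact four_sets_bound hallB (le_of_eq hb3) him
          (Ne.symm hri) (Ne.symm hr'i) (Ne.symm hrm) (Ne.symm hr'm) hrr
          (by rw [hBiPW]; exact Finset.sdiff_subset)
          Finset.Subset.rfl
          (hBrW r hri hrm hXa)
          (hBrW r' hr'i hr'm hXa')
      have noThreeY : ¬(A k1 ⊆ B m₀ \ A i₀ ∧ A k2 ⊆ B m₀ \ A i₀ ∧ A k3 ⊆ B m₀ \ A i₀) := by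
        rintro ⟨hY1, hY2, hY3⟩
        exact three_sets_bound hallA (le_of_eq hPWcard) h12 h13 h23 hY1 hY2 hY3
      have finalXY : ∀ hh ya yb, hh ≠ ya → hh ≠ yb → ya ≠ yb →
          (hh ≠ i₀ ∧ hh ≠ m₀) → (ya ≠ i₀ ∧ ya ≠ m₀) → (yb ≠ i₀ ∧ yb ≠ m₀) →
          (∀ l : ι, l = i₀ ∨ l = m₀ ∨ l = hh ∨ l = ya ∨ l = yb) →
          A i₀ \ B m₀ ⊆ A hh → B m₀ \ A i₀ ⊆ B hh →
          A ya ⊆ B m₀ \ A i₀ → B ya ⊆ A i₀ \ B m₀ →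
          A yb ⊆ B m₀ \ A i₀ → B yb ⊆ A i₀ \ B m₀ → False := by
        intro hh ya yb h1 h2 h3 hhh hya hyb hcov hXa hXb hYa1 hYa2 hYb1 hYb2
        have hcT : c ∈ T := hAT i₀ hc.1
        by_cases hcA : c ∈ A hh
        · have hcB : c ∉ B hh := Finset.disjoint_left.mp (hdisj hh) hcA
          have hres := hc7B c hcT m₀ ?_
          · rw [hres] at hb3; simp at hb3
          · intro l hl
            rcases hcov l with rfl | rfl | rfl | rfl | rfl
            · rw [hBiPW]; exact hcPW
            · exact absurd rfl hl
            · exact hcB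
            · intro hx; exact hcPS (hYa2 hx)
            · intro hx; exact hcPS (hYb2 hx)
        · have hres := hc7A c hcT i₀ ?_
          · rw [hres] at hS; simp at hS
          · intro l hl
            rcases hcov l with rfl | rfl | rfl | rfl | rfl
            · exact absurd rfl hl
            · rw [hAmPS]; exact hcPS
            · exact hcA
            · intro hx; exact hcPW (hYa1 hx)
            · intro hx; exact hcPW (hYb1 hx)
      rcases key k1 hk1.1 hk1.2 with ⟨y11, y12⟩ | ⟨x11, x12⟩ <;>
        rcases key k2 hk2.1 hk2.2 with ⟨y21, y22⟩ | ⟨x21, x22⟩ <;>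
          rcases key k3 hk3.1 hk3.2 with ⟨y31, y32⟩ | ⟨x31, x32⟩
      · exact noThreeY ⟨y11, y21, y31⟩
      · exact finalXY k3 k1 k2 h13.symm h23.symm h12 hk3 hk1 hk2 hcover312
          x31 x32 y11 y12 y21 y22
      · exact finalXY k2 k1 k3 h12.symm h23 h13 hk2 hk1 hk3 hcover213
          x21 x22 y11 y12 y31 y32
      · exact noTwoX k2 k3 h23 hk2.1 hk2.2 hk3.1 hk3.2 x21 x22 x31 x32
      · exact finalXY k1 k2 k3 h12 h13 h23 hk1 hk2 hk3 hcover x11 x12 y21 y22 y31 y32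
      · exact noTwoX k1 k3 h13 hk1.1 hk1.2 hk3.1 hk3.2 x11 x12 x31 x32
      · exact noTwoX k1 k2 h12 hk1.1 hk1.2 hk2.1 hk2.2 x11 x12 x21 x22
      · exact noTwoX k1 k2 h12 hk1.1 hk1.2 hk2.1 hk2.2 x11 x12 x21 x22
    -- ─────────── subcase |S ∩ W| = 2 ───────────
    · -- obtain a, d, e
      have haC : (A i₀ \ B m₀).card = 1 := by
        have : A i₀ \ B m₀ = A i₀ \ (A i₀ ∩ B m₀) := by
          rw [Finset.sdiff_inter_self_left]
        rw [this, Finset.card_sdiff_of_subset Finset.inter_subset_left, hS, hr2]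
      obtain ⟨a, ha⟩ := Finset.card_eq_one.mp haC
      have haS : a ∈ A i₀ ∧ a ∉ B m₀ :=
        Finset.mem_sdiff.mp (ha ▸ Finset.mem_singleton_self a)
      have hdC : (B m₀ \ A i₀).card = 1 := by
        have : B m₀ \ A i₀ = B m₀ \ (B m₀ ∩ A i₀) := by
          rw [Finset.sdiff_inter_self_left]
        rw [this, Finset.card_sdiff_of_subset Finset.inter_subset_left, hb3, Finset.inter_comm, hr2]
      obtain ⟨d, hd⟩ := Finset.card_eq_one.mp hdC
      have hdW : d ∈ B m₀ ∧ d ∉ A i₀ :=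
        Finset.mem_sdiff.mp (hd ▸ Finset.mem_singleton_self d)
      have hUcard : (A i₀ ∪ B m₀).card = 4 := by
        have := Finset.card_union_add_card_inter (A i₀) (B m₀)
        omega
      have heC : (T \ (A i₀ ∪ B m₀)).card = 1 := by
        rw [Finset.card_sdiff_of_subset (Finset.union_subset (hAT i₀) (hBT m₀)), hT, hUcard]
      obtain ⟨e, he⟩ := Finset.card_eq_one.mp heC
      have heP : e ∈ T ∧ e ∉ A i₀ ∪ B m₀ :=
        Finset.mem_sdiff.mp (he ▸ Finset.mem_singleton_self e)
      have heS : e ∉ A i₀ := fun h => heP.2 (Finset.mem_union_left _ h)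
      have heW : e ∉ B m₀ := fun h => heP.2 (Finset.mem_union_right _ h)
      have hade : a ≠ d ∧ a ≠ e ∧ d ≠ e := by
        refine ⟨?_, ?_, ?_⟩
        · rintro rfl; exact hdW.2 haS.1
        · rintro rfl; exact heS haS.1
        · rintro rfl; exact heW hdW.1
      have hTS : T \ A i₀ = {d, e} := by
        symm
        apply Finset.eq_of_subset_of_card_le
        · intro x hx
          rcases Finset.mem_insert.mp hx with rfl | hx'
          · exact Finset.mem_sdiff.mpr ⟨hBT m₀ hdW.1, hdW.2⟩
          · rcases Finset.mem_singleton.mp hx' with rfl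
            exact Finset.mem_sdiff.mpr ⟨heP.1, heS⟩
        · rw [hcS, Finset.card_insert_of_notMem (by simp [hade.2.2]),
            Finset.card_singleton]
      have hTW : T \ B m₀ = {a, e} := by
        symm
        apply Finset.eq_of_subset_of_card_le
        · intro x hx
          rcases Finset.mem_insert.mp hx with rfl | hx'
          · exact Finset.mem_sdiff.mpr ⟨hAT i₀ haS.1, haS.2⟩
          · rcases Finset.mem_singleton.mp hx' with rfl
            exact Finset.mem_sdiff.mpr ⟨heP.1, heW⟩
        · rw [hcW, Finset.card_insert_of_notMem (by simp [hade.2.1]),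
            Finset.card_singleton]
      have hBie : B i₀ = {e} := by
        have hsub : B i₀ ⊆ {d, e} := hTS ▸ hBisub
        have hint : B i₀ ∩ B m₀ ⊆ {d} := by
          intro x hx
          obtain ⟨hx1, hx2⟩ := Finset.mem_inter.mp hx
          rcases Finset.mem_insert.mp (hsub hx1) with rfl | hx'
          · simp
          · rcases Finset.mem_singleton.mp hx' with rfl
            exact absurd hx2 heW
        have hempty := empty_of_subset_singleton hint (hoB i₀ m₀ him)
        have hdnot : d ∉ B i₀ := fun hdb => by
          have : d ∈ B i₀ ∩ B m₀ := Finset.mem_inter.mpr ⟨hdb, hdW.1⟩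
          rw [hempty] at this; exact absurd this (Finset.notMem_empty d)
        apply eq_singleton_of_subset _ (hBne i₀)
        intro x hx
        rcases Finset.mem_insert.mp (hsub hx) with rfl | hx'
        · exact absurd hx hdnot
        · exact hx'
      have hAme : A m₀ = {e} := by
        have hsub : A m₀ ⊆ {a, e} := hTW ▸ hAmsub
        have hint : A m₀ ∩ A i₀ ⊆ {a} := by
          intro x hx
          obtain ⟨hx1, hx2⟩ := Finset.mem_inter.mp hx
          rcases Finset.mem_insert.mp (hsub hx1) with rfl | hx'
          · simp
          · rcases Finset.mem_singleton.mp hx' with rfl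
            exact absurd hx2 heS
        have hempty := empty_of_subset_singleton hint (hoA m₀ i₀ him.symm)
        have hanot : a ∉ A m₀ := fun hab => by
          have : a ∈ A m₀ ∩ A i₀ := Finset.mem_inter.mpr ⟨hab, haS.1⟩
          rw [hempty] at this; exact absurd this (Finset.notMem_empty a)
        apply eq_singleton_of_subset _ (hAne m₀)
        intro x hx
        rcases Finset.mem_insert.mp (hsub hx) with rfl | hx'
        · exact absurd hx hanot
        · exact hx'
      have keyE : ∀ r, r ≠ i₀ → r ≠ m₀ → e ∉ A r ∧ e ∉ B r := by
        intro r hri hrm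
        constructor
        · have h1 := hoA r m₀ hrm
          rw [hAme] at h1
          exact not_mem_of_inter_card_ne_one h1
        · have h1 := hoB r i₀ hri
          rw [hBie] at h1
          exact not_mem_of_inter_card_ne_one h1
      have hDeq : A i₀ ∪ B m₀ = T \ {e} := by
        apply Finset.eq_of_subset_of_card_le
        · intro x hx
          refine Finset.mem_sdiff.mpr ⟨?_, ?_⟩
          · rcases Finset.mem_union.mp hx with h | h
            · exact hAT i₀ h
            · exact hBT m₀ h
          · simp only [Finset.mem_singleton]
            rintro rfl; exact heP.2 hx
        · rw [Finset.card_sdiff_of_subset (Finset.singleton_subset_iff.mpr heP.1), hT,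
            Finset.card_singleton, hUcard]
      have hsubD : ∀ r, r ≠ i₀ → r ≠ m₀ → A r ⊆ A i₀ ∪ B m₀ ∧ B r ⊆ A i₀ ∪ B m₀ := by
        intro r hri hrm
        rw [hDeq]
        constructor
        · intro x hx
          refine Finset.mem_sdiff.mpr ⟨hAT r hx, ?_⟩
          simp only [Finset.mem_singleton]; rintro rfl; exact (keyE r hri hrm).1 hx
        · intro x hx
          refine Finset.mem_sdiff.mpr ⟨hBT r hx, ?_⟩
          simp only [Finset.mem_singleton]; rintro rfl; exact (keyE r hri hrm).2 hx
      have hMa : A i₀ \ {a} = A i₀ ∩ B m₀ := by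
        rw [← ha, Finset.sdiff_sdiff_self_left]
      have hMd : B m₀ \ {d} = A i₀ ∩ B m₀ := by
        rw [← hd, Finset.sdiff_sdiff_self_left, Finset.inter_comm]
      have claimX : ∀ r, r ≠ i₀ → r ≠ m₀ → 2 ≤ (A r ∩ A i₀).card →
          2 ≤ (B r ∩ B m₀).card →
          ∃ z w, z ≠ w ∧ A i₀ ∩ B m₀ = {z, w} ∧ A r = {a, z} ∧ B r = {d, w} := by
        intro r hri hrm hA2 hB2
        obtain ⟨hAD, hBD⟩ := hsubD r hri hrm
        have hsum4 : (A r).card + (B r).card ≤ 4 := by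
          have h1 := Finset.card_union_of_disjoint (hdisj r)
          have h2 := Finset.card_le_card (Finset.union_subset hAD hBD)
          rw [h1, hUcard] at h2
          exact h2
        have hiA : (A r ∩ A i₀).card ≤ (A r).card :=
          Finset.card_le_card Finset.inter_subset_left
        have hiB : (B r ∩ B m₀).card ≤ (B r).card :=
          Finset.card_le_card Finset.inter_subset_left
        have hAcard : (A r).card = 2 := by omega
        have hBcard : (B r).card = 2 := by omega
        have hArS : A r ⊆ A i₀ := by
          have : A r ∩ A i₀ = A r :=
            Finset.eq_of_subset_of_card_le Finset.inter_subset_left (by omega)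
          rw [← this]; exact Finset.inter_subset_right
        have hBrW : B r ⊆ B m₀ := by
          have : B r ∩ B m₀ = B r :=
            Finset.eq_of_subset_of_card_le Finset.inter_subset_left (by omega)
          rw [← this]; exact Finset.inter_subset_right
        have hunion : A r ∪ B r = A i₀ ∪ B m₀ := by
          apply Finset.eq_of_subset_of_card_le
          · exact Finset.union_subset
              (fun x hx => Finset.mem_union_left _ (hArS hx))
              (fun x hx => Finset.mem_union_right _ (hBrW hx))
          · rw [Finset.card_union_of_disjoint (hdisj r), hUcard]; omega
        have haA : a ∈ A r := by
          have : a ∈ A r ∪ B r := hunion ▸ Finset.mem_union_left _ haS.1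
          rcases Finset.mem_union.mp this with h | h
          · exact h
          · exact absurd (hBrW h) haS.2
        have hdB : d ∈ B r := by
          have : d ∈ A r ∪ B r := hunion ▸ Finset.mem_union_right _ hdW.1
          rcases Finset.mem_union.mp this with h | h
          · exact absurd (hArS h) hdW.2
          · exact h
        obtain ⟨z, hza, hAz⟩ := pair_other hAcard haA
        obtain ⟨w, hwd, hBw⟩ := pair_other hBcard hdB
        have hzAr : z ∈ A r := by rw [hAz]; simp
        have hwBr : w ∈ B r := by rw [hBw]; simp
        have hzM : z ∈ A i₀ ∩ B m₀ := by
          rw [← hMa]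
          exact Finset.mem_sdiff.mpr ⟨hArS hzAr, by simp [hza]⟩
        have hwM : w ∈ A i₀ ∩ B m₀ := by
          rw [← hMd]
          exact Finset.mem_sdiff.mpr ⟨hBrW hwBr, by simp [hwd]⟩
        have hzw : z ≠ w := by
          rintro rfl
          exact Finset.disjoint_left.mp (hdisj r) hzAr hwBr
        refine ⟨z, w, hzw, ?_, hAz, hBw⟩
        symm
        apply Finset.eq_of_subset_of_card_le
        · intro x hx
          rcases Finset.mem_insert.mp hx with rfl | hx'
          · exact hzM
          · rcases Finset.mem_singleton.mp hx' with rfl; exact hwM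
        · rw [hr2, Finset.card_insert_of_notMem (by simp [hzw]), Finset.card_singleton]
      have claimNX : ∀ r, r ≠ i₀ → r ≠ m₀ →
          ¬(2 ≤ (A r ∩ A i₀).card ∧ 2 ≤ (B r ∩ B m₀).card) →
          A r = {d} ∨ B r = {a} := by
        intro r hri hrm hnx
        obtain ⟨hAD, hBD⟩ := hsubD r hri hrm
        have hoa := hoA r i₀ hri
        have hob := hoB r m₀ hrm
        have : (A r ∩ A i₀).card = 0 ∨ (B r ∩ B m₀).card = 0 := by
          by_contra hc
          push_neg at hc
          exact hnx ⟨by omega, by omega⟩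
        rcases this with h0 | h0
        · left
          apply eq_singleton_of_subset _ (hAne r)
          intro x hx
          have hxS : x ∉ A i₀ := fun hxs => by
            have : x ∈ A r ∩ A i₀ := Finset.mem_inter.mpr ⟨hx, hxs⟩
            rw [Finset.card_eq_zero.mp h0] at this
            exact absurd this (Finset.notMem_empty x)
          have : x ∈ B m₀ := by
            rcases Finset.mem_union.mp (hAD hx) with h | h
            · exact absurd h hxS
            · exact h
          rw [← hd]
          exact Finset.mem_sdiff.mpr ⟨this, hxS⟩
        · right
          apply eq_singleton_of_subset _ (hBne r)
          intro x hx
          have hxW : x ∉ B m₀ := fun hxs => by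
            have : x ∈ B r ∩ B m₀ := Finset.mem_inter.mpr ⟨hx, hxs⟩
            rw [Finset.card_eq_zero.mp h0] at this
            exact absurd this (Finset.notMem_empty x)
          have : x ∈ A i₀ := by
            rcases Finset.mem_union.mp (hBD hx) with h | h
            · exact h
            · exact absurd h hxW
          rw [← ha]
          exact Finset.mem_sdiff.mpr ⟨this, hxW⟩
      have habsAd : ∀ r r', r ≠ r' → A r = {d} → A r' = {d} → False := by
        intro r r' hrr e1 e2
        have := hoA r r' hrr
        rw [e1, e2] at this
        simp at this
      have habsBa : ∀ r r', r ≠ r' → B r = {a} → B r' = {a} → False := by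
        intro r r' hrr e1 e2
        have := hoB r r' hrr
        rw [e1, e2] at this
        simp at this
      have finalX2 : ∀ ra rb rc, ra ≠ rb → ra ≠ rc → rb ≠ rc →
          (ra ≠ i₀ ∧ ra ≠ m₀) → (rb ≠ i₀ ∧ rb ≠ m₀) → (rc ≠ i₀ ∧ rc ≠ m₀) →
          (∀ l : ι, l = i₀ ∨ l = m₀ ∨ l = ra ∨ l = rb ∨ l = rc) →
          (2 ≤ (A ra ∩ A i₀).card ∧ 2 ≤ (B ra ∩ B m₀).card) →
          (2 ≤ (A rb ∩ A i₀).card ∧ 2 ≤ (B rb ∩ B m₀).card) → False := by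
        intro ra rb rc hab hac hbc hra hrb hrc hcov hXa hXb
        obtain ⟨z, w, hzw, hM, hAz, hBw⟩ := claimX ra hra.1 hra.2 hXa.1 hXa.2
        obtain ⟨z', w', hzw', hM', hAz', hBw'⟩ := claimX rb hrb.1 hrb.2 hXb.1 hXb.2
        have hzS : z ∈ A i₀ ∧ z ∈ B m₀ := by
          have : z ∈ A i₀ ∩ B m₀ := by rw [hM]; simp
          exact Finset.mem_inter.mp this
        have hwS : w ∈ A i₀ ∧ w ∈ B m₀ := by
          have : w ∈ A i₀ ∩ B m₀ := by rw [hM]; simp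
          exact Finset.mem_inter.mp this
        have hza : z ≠ a := by rintro rfl; exact haS.2 hzS.2
        have hz'a : z' ≠ a := by
          rintro rfl
          have : z' ∈ A i₀ ∩ B m₀ := by rw [hM']; simp
          exact haS.2 (Finset.mem_inter.mp this).2
        have hzz : z' = z := by
          by_contra hne
          have h1 := hoA ra rb hab
          rw [hAz, hAz'] at h1
          apply h1
          have : ({a, z} ∩ {a, z'} : Finset α) = {a} := by
            apply Finset.Subset.antisymm
            · intro x hx
              obtain ⟨hx1, hx2⟩ := Finset.mem_inter.mp hx
              rcases Finset.mem_insert.mp hx1 with rfl | hx1'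
              · simp
              · rcases Finset.mem_singleton.mp hx1' with rfl
                rcases Finset.mem_insert.mp hx2 with h | h
                · exact absurd h hza
                · exact absurd (Finset.mem_singleton.mp h) (fun hh => hne hh.symm)
            · intro x hx
              rcases Finset.mem_singleton.mp hx with rfl
              exact Finset.mem_inter.mpr ⟨by simp, by simp⟩
          rw [this, Finset.card_singleton]
        have hww : w' = w := by
          have hmm : w' ∈ ({z, w} : Finset α) := by rw [← hM, hM']; simp
          rcases Finset.mem_insert.mp hmm with h | h
          · exact absurd (hzz.trans h.symm) hzw'
          · exact Finset.mem_singleton.mp h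
        rw [hzz] at hAz' hM'
        rw [hww] at hBw'
        by_cases hXc : 2 ≤ (A rc ∩ A i₀).card ∧ 2 ≤ (B rc ∩ B m₀).card
        · obtain ⟨z'', w'', hzw'', hM'', hAz'', hBw''⟩ := claimX rc hrc.1 hrc.2 hXc.1 hXc.2
          have hz''a : z'' ≠ a := by
            rintro rfl
            have : z'' ∈ A i₀ ∩ B m₀ := by rw [hM'']; simp
            exact haS.2 (Finset.mem_inter.mp this).2
          have hzz'' : z'' = z := by
            by_contra hne
            have h1 := hoA ra rc hac
            rw [hAz, hAz''] at h1
            apply h1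
            have : ({a, z} ∩ {a, z''} : Finset α) = {a} := by
              apply Finset.Subset.antisymm
              · intro x hx
                obtain ⟨hx1, hx2⟩ := Finset.mem_inter.mp hx
                rcases Finset.mem_insert.mp hx1 with rfl | hx1'
                · simp
                · rcases Finset.mem_singleton.mp hx1' with rfl
                  rcases Finset.mem_insert.mp hx2 with h | h
                  · exact absurd h hza
                  · exact absurd (Finset.mem_singleton.mp h) (Ne.symm hne)
              · intro x hx
                rcases Finset.mem_singleton.mp hx with rfl
                exact Finset.mem_inter.mpr ⟨by simp, by simp⟩
            rw [this, Finset.card_singleton]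
          rw [hzz''] at hAz''
          have hP2 : ({a, z} : Finset α).card ≤ 2 := by
            apply le_trans (Finset.card_insert_le a {z})
            simp
          exact three_sets_bound hallA hP2 hab hac hbc (le_of_eq hAz)
            (le_of_eq hAz') (le_of_eq hAz'')
        · have hcd : A rc = {d} ∨ B rc = {a} := claimNX rc hrc.1 hrc.2 hXc
          have hSazw : A i₀ = {a, z, w} := by
            symm
            apply Finset.eq_of_subset_of_card_le
            · intro x hx
              rcases Finset.mem_insert.mp hx with rfl | hx'
              · exact haS.1
              · rcases Finset.mem_insert.mp hx' with rfl | hx''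
                · exact hzS.1
                · rcases Finset.mem_singleton.mp hx'' with rfl
                  exact hwS.1
            · rw [hS]
              have hwa : w ≠ a := by rintro rfl; exact haS.2 hwS.2
              rw [Finset.card_insert_of_notMem (by simp [Ne.symm hza, Ne.symm hwa]),
                Finset.card_insert_of_notMem (by simp [hzw]), Finset.card_singleton]
          have hWdzw : B m₀ = {d, z, w} := by
            symm
            apply Finset.eq_of_subset_of_card_le
            · intro x hx
              rcases Finset.mem_insert.mp hx with rfl | hx'
              · exact hdW.1
              · rcases Finset.mem_insert.mp hx' with rfl | hx''
                · exact hzS.2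
                · rcases Finset.mem_singleton.mp hx'' with rfl
                  exact hwS.2
            · rw [hb3]
              have hdz : d ≠ z := by rintro rfl; exact hdW.2 hzS.1
              have hdw : d ≠ w := by rintro rfl; exact hdW.2 hwS.1
              rw [Finset.card_insert_of_notMem (by simp [hdz, hdw]),
                Finset.card_insert_of_notMem (by simp [hzw]), Finset.card_singleton]
          have hAcd : A rc = {d} := by
            rcases hcd with h | h
            · exact h
            · have hanotA : a ∉ A rc := fun hx =>
                Finset.disjoint_left.mp (hdisj rc) hx (by rw [h]; simp)
              have hznotA : z ∉ A rc := by
                have h1 := hoA rc ra (Ne.symm hac)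
                rw [hAz] at h1
                have hsub : A rc ∩ {a, z} ⊆ {z} := by
                  intro x hx
                  obtain ⟨hx1, hx2⟩ := Finset.mem_inter.mp hx
                  rcases Finset.mem_insert.mp hx2 with rfl | hx'
                  · exact absurd hx1 hanotA
                  · exact hx'
                have hemp := empty_of_subset_singleton hsub h1
                intro hz
                have : z ∈ A rc ∩ {a, z} := Finset.mem_inter.mpr ⟨hz, by simp⟩
                rw [hemp] at this; exact absurd this (Finset.notMem_empty z)
              have hwnotA : w ∉ A rc := by
                have h1 := hoA rc i₀ hrc.1
                have hsub : A rc ∩ A i₀ ⊆ {w} := by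
                  intro x hx
                  obtain ⟨hx1, hx2⟩ := Finset.mem_inter.mp hx
                  rw [hSazw] at hx2
                  rcases Finset.mem_insert.mp hx2 with rfl | hx'
                  · exact absurd hx1 hanotA
                  · rcases Finset.mem_insert.mp hx' with rfl | hx''
                    · exact absurd hx1 hznotA
                    · exact hx''
                have hemp := empty_of_subset_singleton hsub h1
                intro hw
                have : w ∈ A rc ∩ A i₀ := Finset.mem_inter.mpr ⟨hw, hwS.1⟩
                rw [hemp] at this; exact absurd this (Finset.notMem_empty w)
              apply eq_singleton_of_subset _ (hAne rc)
              intro x hx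
              have hxD := (hsubD rc hrc.1 hrc.2).1 hx
              rcases Finset.mem_union.mp hxD with hxs | hxw
              · rw [hSazw] at hxs
                rcases Finset.mem_insert.mp hxs with rfl | hx'
                · exact absurd hx hanotA
                · rcases Finset.mem_insert.mp hx' with rfl | hx''
                  · exact absurd hx hznotA
                  · rcases Finset.mem_singleton.mp hx'' with rfl
                    exact absurd hx hwnotA
              · rw [hWdzw] at hxw
                rcases Finset.mem_insert.mp hxw with rfl | hx'
                · simp
                · rcases Finset.mem_insert.mp hx' with rfl | hx''
                  · exact absurd hx hznotA
                  · rcases Finset.mem_singleton.mp hx'' with rfl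
                    exact absurd hx hwnotA
          have hresult := hc7A w (hAT i₀ hwS.1) i₀ ?_
          · rw [hresult] at hS; simp at hS
          · intro l hl
            rcases hcov l with rfl | rfl | rfl | rfl | rfl
            · exact absurd rfl hl
            · rw [hAme]
              simp only [Finset.mem_singleton]
              rintro rfl; exact heS hwS.1
            · rw [hAz]
              have hwa : w ≠ a := by rintro rfl; exact haS.2 hwS.2
              simp [hwa, Ne.symm hzw]
            · rw [hAz']
              have hwa : w ≠ a := by rintro rfl; exact haS.2 hwS.2
              simp [hwa, Ne.symm hzw]
            · rw [hAcd]
              have hwd : w ≠ d := by rintro rfl; exact hdW.2 hwS.1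
              simp [hwd]
      have hnx2 : ∀ ra rb rc, ra ≠ rb → ra ≠ rc → rb ≠ rc →
          (ra ≠ i₀ ∧ ra ≠ m₀) → (rb ≠ i₀ ∧ rb ≠ m₀) → (rc ≠ i₀ ∧ rc ≠ m₀) →
          ¬(2 ≤ (A ra ∩ A i₀).card ∧ 2 ≤ (B ra ∩ B m₀).card) →
          ¬(2 ≤ (A rb ∩ A i₀).card ∧ 2 ≤ (B rb ∩ B m₀).card) →
          (2 ≤ (A rc ∩ A i₀).card ∧ 2 ≤ (B rc ∩ B m₀).card) → False := by
        intro ra rb rc hab hac hbc hra hrb hrc hNa hNb hXc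
        obtain ⟨z, w, hzw, hM, hAz, hBw⟩ := claimX rc hrc.1 hrc.2 hXc.1 hXc.2
        have hzS : z ∈ A i₀ ∧ z ∈ B m₀ := by
          have : z ∈ A i₀ ∩ B m₀ := by rw [hM]; simp
          exact Finset.mem_inter.mp this
        have hwS : w ∈ A i₀ ∧ w ∈ B m₀ := by
          have : w ∈ A i₀ ∩ B m₀ := by rw [hM]; simp
          exact Finset.mem_inter.mp this
        have hWdzw : B m₀ = {d, z, w} := by
          symm
          apply Finset.eq_of_subset_of_card_le
          · intro x hx
            rcases Finset.mem_insert.mp hx with rfl | hx'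
            · exact hdW.1
            · rcases Finset.mem_insert.mp hx' with rfl | hx''
              · exact hzS.2
              · rcases Finset.mem_singleton.mp hx'' with rfl
                exact hwS.2
          · rw [hb3]
            have hdz : d ≠ z := by rintro rfl; exact hdW.2 hzS.1
            have hdw : d ≠ w := by rintro rfl; exact hdW.2 hwS.1
            rw [Finset.card_insert_of_notMem (by simp [hdz, hdw]),
              Finset.card_insert_of_notMem (by simp [hzw]), Finset.card_singleton]
        have hprop' : ∀ h, h ≠ i₀ → h ≠ m₀ → h ≠ rc → B h = {a} → A h = {d} := by
          intro h hhi hhm hhc hBh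
          have hanotA : a ∉ A h := fun hx =>
            Finset.disjoint_left.mp (hdisj h) hx (by rw [hBh]; simp)
          have hznotA : z ∉ A h := by
            have h1 := hoA h rc hhc
            rw [hAz] at h1
            have hsub : A h ∩ {a, z} ⊆ {z} := by
              intro x hx
              obtain ⟨hx1, hx2⟩ := Finset.mem_inter.mp hx
              rcases Finset.mem_insert.mp hx2 with rfl | hx'
              · exact absurd hx1 hanotA
              · exact hx'
            have hemp := empty_of_subset_singleton hsub h1
            intro hz
            have : z ∈ A h ∩ {a, z} := Finset.mem_inter.mpr ⟨hz, by simp⟩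
            rw [hemp] at this; exact absurd this (Finset.notMem_empty z)
          have hSazw : A i₀ = {a, z, w} := by
            symm
            apply Finset.eq_of_subset_of_card_le
            · intro x hx
              rcases Finset.mem_insert.mp hx with rfl | hx'
              · exact haS.1
              · rcases Finset.mem_insert.mp hx' with rfl | hx''
                · exact hzS.1
                · rcases Finset.mem_singleton.mp hx'' with rfl
                  exact hwS.1
            · rw [hS]
              have hza : z ≠ a := by rintro rfl; exact haS.2 hzS.2
              have hwa : w ≠ a := by rintro rfl; exact haS.2 hwS.2
              rw [Finset.card_insert_of_notMem (by simp [Ne.symm hza, Ne.symm hwa]),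
                Finset.card_insert_of_notMem (by simp [hzw]), Finset.card_singleton]
          have hwnotA : w ∉ A h := by
            have h1 := hoA h i₀ hhi
            have hsub : A h ∩ A i₀ ⊆ {w} := by
              intro x hx
              obtain ⟨hx1, hx2⟩ := Finset.mem_inter.mp hx
              rw [hSazw] at hx2
              rcases Finset.mem_insert.mp hx2 with rfl | hx'
              · exact absurd hx1 hanotA
              · rcases Finset.mem_insert.mp hx' with rfl | hx''
                · exact absurd hx1 hznotA
                · exact hx''
            have hemp := empty_of_subset_singleton hsub h1
            intro hw
            have : w ∈ A h ∩ A i₀ := Finset.mem_inter.mpr ⟨hw, hwS.1⟩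
            rw [hemp] at this; exact absurd this (Finset.notMem_empty w)
          apply eq_singleton_of_subset _ (hAne h)
          intro x hx
          have hxD := (hsubD h hhi hhm).1 hx
          rcases Finset.mem_union.mp hxD with hxs | hxw
          · rw [hSazw] at hxs
            rcases Finset.mem_insert.mp hxs with rfl | hx'
            · exact absurd hx hanotA
            · rcases Finset.mem_insert.mp hx' with rfl | hx''
              · exact absurd hx hznotA
              · rcases Finset.mem_singleton.mp hx'' with rfl
                exact absurd hx hwnotA
          · rw [← hd]
            refine Finset.mem_sdiff.mpr ⟨hxw, fun hxs => ?_⟩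
            rw [hSazw] at hxs
            rcases Finset.mem_insert.mp hxs with rfl | hx'
            · exact hanotA hx
            · rcases Finset.mem_insert.mp hx' with rfl | hx''
              · exact hznotA hx
              · rcases Finset.mem_singleton.mp hx'' with rfl
                exact hwnotA hx
        have hda : A ra = {d} := by
          rcases claimNX ra hra.1 hra.2 hNa with h | h
          · exact h
          · exact hprop' ra hra.1 hra.2 hac h
        have hdb : A rb = {d} := by
          rcases claimNX rb hrb.1 hrb.2 hNb with h | h
          · exact h
          · exact hprop' rb hrb.1 hrb.2 hbc h
        exact habsAd ra rb hab hda hdb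
      have hnx0 : ¬(¬(2 ≤ (A k1 ∩ A i₀).card ∧ 2 ≤ (B k1 ∩ B m₀).card) ∧
          ¬(2 ≤ (A k2 ∩ A i₀).card ∧ 2 ≤ (B k2 ∩ B m₀).card) ∧
          ¬(2 ≤ (A k3 ∩ A i₀).card ∧ 2 ≤ (B k3 ∩ B m₀).card)) := by
        rintro ⟨hN1, hN2, hN3⟩
        rcases claimNX k1 hk1.1 hk1.2 hN1 with e1 | e1 <;>
          rcases claimNX k2 hk2.1 hk2.2 hN2 with e2 | e2 <;>
            rcases claimNX k3 hk3.1 hk3.2 hN3 with e3 | e3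
        · exact habsAd k1 k2 h12 e1 e2
        · exact habsAd k1 k2 h12 e1 e2
        · exact habsAd k1 k3 h13 e1 e3
        · exact habsBa k2 k3 h23 e2 e3
        · exact habsAd k2 k3 h23 e2 e3
        · exact habsBa k1 k3 h13 e1 e3
        · exact habsBa k1 k2 h12 e1 e2
        · exact habsBa k1 k2 h12 e1 e2
      by_cases hX1 : 2 ≤ (A k1 ∩ A i₀).card ∧ 2 ≤ (B k1 ∩ B m₀).card <;>
        by_cases hX2 : 2 ≤ (A k2 ∩ A i₀).card ∧ 2 ≤ (B k2 ∩ B m₀).card <;>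
          by_cases hX3 : 2 ≤ (A k3 ∩ A i₀).card ∧ 2 ≤ (B k3 ∩ B m₀).card
      · exact finalX2 k1 k2 k3 h12 h13 h23 hk1 hk2 hk3 hcover hX1 hX2
      · exact finalX2 k1 k2 k3 h12 h13 h23 hk1 hk2 hk3 hcover hX1 hX2
      · exact finalX2 k1 k3 k2 h13 h12 h23.symm hk1 hk3 hk2 hcover132 hX1 hX3
      · exact hnx2 k2 k3 k1 h23 h12.symm h13.symm hk2 hk3 hk1 hX2 hX3 hX1
      · exact finalX2 k2 k3 k1 h23 h12.symm h13.symm hk2 hk3 hk1 hcover231 hX2 hX3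
      · exact hnx2 k1 k3 k2 h13 h12 h23.symm hk1 hk3 hk2 hX1 hX3 hX2
      · exact hnx2 k1 k2 k3 h12 h13 h23 hk1 hk2 hk3 hX1 hX2 hX3
      · exact hnx0 ⟨hX1, hX2, hX3⟩
    -- ─────────── subcase |S ∩ W| = 3 : S = W ───────────
    · have hSW : A i₀ = B m₀ := by
        have e1 : A i₀ ∩ B m₀ = A i₀ :=
          Finset.eq_of_subset_of_card_le Finset.inter_subset_left (by omega)
        have e2 : A i₀ ∩ B m₀ = B m₀ :=
          Finset.eq_of_subset_of_card_le Finset.inter_subset_right (by omega)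
        rw [← e1, e2]
      have key : ∀ r, r ≠ i₀ → r ≠ m₀ → A r ⊆ T \ A i₀ ∨ B r ⊆ T \ A i₀ := by
        intro r hri hrm
        have ha := hoA r i₀ hri
        have hb := hoB r m₀ hrm
        rw [← hSW] at hb
        have hdsub : (A r ∩ A i₀) ∪ (B r ∩ A i₀) ⊆ A i₀ :=
          Finset.union_subset Finset.inter_subset_right Finset.inter_subset_right
        have hd : Disjoint (A r ∩ A i₀) (B r ∩ A i₀) :=
          Finset.disjoint_left.mpr fun x hx1 hx2 =>
            Finset.disjoint_left.mp (hdisj r) (Finset.mem_inter.mp hx1).1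
              (Finset.mem_inter.mp hx2).1
        have hcle : (A r ∩ A i₀).card + (B r ∩ A i₀).card ≤ 3 := by
          have := Finset.card_union_of_disjoint hd
          have h2 := Finset.card_le_card hdsub
          rw [this] at h2
          omega
        have : (A r ∩ A i₀).card = 0 ∨ (B r ∩ A i₀).card = 0 := by omega
        rcases this with h0 | h0
        · left
          intro x hx
          refine Finset.mem_sdiff.mpr ⟨hAT r hx, fun hxS => ?_⟩
          have : x ∈ A r ∩ A i₀ := Finset.mem_inter.mpr ⟨hx, hxS⟩
          rw [Finset.card_eq_zero.mp h0] at this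
          exact absurd this (Finset.notMem_empty x)
        · right
          intro x hx
          refine Finset.mem_sdiff.mpr ⟨hBT r hx, fun hxS => ?_⟩
          have : x ∈ B r ∩ A i₀ := Finset.mem_inter.mpr ⟨hx, hxS⟩
          rw [Finset.card_eq_zero.mp h0] at this
          exact absurd this (Finset.notMem_empty x)
      have hAmsub' : A m₀ ⊆ T \ A i₀ := by rw [hSW]; exact hAmsub
      have habsA : ∀ r r', r ≠ r' → r ≠ m₀ → r' ≠ m₀ →
          A r ⊆ T \ A i₀ → A r' ⊆ T \ A i₀ → False := by
        intro r r' hrr hrm hr'm h1 h2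
        exact three_sets_bound hallA (le_of_eq hcS) hrm.symm hr'm.symm hrr
          hAmsub' h1 h2
      have habsB : ∀ r r', r ≠ r' → r ≠ i₀ → r' ≠ i₀ →
          B r ⊆ T \ A i₀ → B r' ⊆ T \ A i₀ → False := by
        intro r r' hrr hri hr'i h1 h2
        exact three_sets_bound hallB (le_of_eq hcS) hri.symm hr'i.symm hrr
          hBisub h1 h2
      rcases key k1 hk1.1 hk1.2 with c1 | c1 <;>
        rcases key k2 hk2.1 hk2.2 with c2 | c2 <;>
          rcases key k3 hk3.1 hk3.2 with c3 | c3
      · exact habsA k1 k2 h12 hk1.2 hk2.2 c1 c2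
      · exact habsA k1 k2 h12 hk1.2 hk2.2 c1 c2
      · exact habsA k1 k3 h13 hk1.2 hk3.2 c1 c3
      · exact habsB k2 k3 h23 hk2.1 hk3.1 c2 c3
      · exact habsA k2 k3 h23 hk2.2 hk3.2 c2 c3
      · exact habsB k1 k3 h13 hk1.1 hk3.1 c1 c3
      · exact habsB k1 k2 h12 hk1.1 hk2.1 c1 c2
      · exact habsB k1 k2 h12 hk1.1 hk2.1 c1 c2
  -- ═══════════ CASE |W| = 4 ═══════════
  · have htW : (T \ B m₀).card = 1 := by
      rw [Finset.card_sdiff_of_subset (hBT m₀), hT, hb4]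
    obtain ⟨t, ht⟩ := Finset.card_eq_one.mp htW
    have htT : t ∈ T ∧ t ∉ B m₀ := by
      have : t ∈ T \ B m₀ := ht ▸ Finset.mem_singleton_self t
      exact Finset.mem_sdiff.mp this
    have hAmt : A m₀ = {t} := by
      apply eq_singleton_of_subset _ (hAne m₀)
      intro x hx
      rw [← ht]
      exact Finset.mem_sdiff.mpr ⟨hAT m₀ hx, Finset.disjoint_left.mp (hdisj m₀) hx⟩
    have htS : t ∉ A i₀ := by
      have h1 := hoA i₀ m₀ him
      rw [hAmt] at h1
      exact not_mem_of_inter_card_ne_one h1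
    have hcS : (T \ A i₀).card = 2 := by rw [Finset.card_sdiff_of_subset (hAT i₀), hT, hS]
    obtain ⟨s, hst, hTS⟩ := pair_other hcS (Finset.mem_sdiff.mpr ⟨htT.1, htS⟩)
    have hsTS : s ∈ T \ A i₀ := by rw [hTS]; simp
    have hsT : s ∈ T := (Finset.mem_sdiff.mp hsTS).1
    have hsS : s ∉ A i₀ := (Finset.mem_sdiff.mp hsTS).2
    have hWeq : B m₀ = T \ {t} := by
      rw [← ht]; exact (Finset.sdiff_sdiff_eq_self (hBT m₀)).symm
    have hsW : s ∈ B m₀ := by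
      rw [hWeq]; exact Finset.mem_sdiff.mpr ⟨hsT, by simp [hst]⟩
    have hBit : B i₀ = {t} := by
      have hsub : B i₀ ⊆ {t, s} := by
        intro x hx
        rw [← hTS]
        exact Finset.mem_sdiff.mpr ⟨hBT i₀ hx, Finset.disjoint_right.mp (hdisj i₀) hx⟩
      have hint : B i₀ ∩ B m₀ ⊆ {s} := by
        intro x hx
        obtain ⟨hx1, hx2⟩ := Finset.mem_inter.mp hx
        rcases Finset.mem_insert.mp (hsub hx1) with rfl | h
        · exact absurd hx2 htT.2
        · exact h
      have hempty := empty_of_subset_singleton hint (hoB i₀ m₀ him)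
      have hsnot : s ∉ B i₀ := by
        intro hs
        have : s ∈ B i₀ ∩ B m₀ := Finset.mem_inter.mpr ⟨hs, hsW⟩
        rw [hempty] at this; exact absurd this (Finset.notMem_empty s)
      apply eq_singleton_of_subset _ (hBne i₀)
      intro x hx
      rcases Finset.mem_insert.mp (hsub hx) with rfl | h
      · exact Finset.mem_singleton_self _
      · rcases Finset.mem_singleton.mp h with rfl
        exact absurd hx hsnot
    have key2 : ∀ r, r ≠ i₀ → r ≠ m₀ → A r = {s} ∨ (A r ⊆ A i₀ ∧ (A r).card = 2) := by
      intro r hri hrm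
      have htA : t ∉ A r := by
        have h1 := hoA r m₀ hrm
        rw [hAmt] at h1
        exact not_mem_of_inter_card_ne_one h1
      have htB : t ∉ B r := by
        have h1 := hoB r i₀ hri
        rw [hBit] at h1
        exact not_mem_of_inter_card_ne_one h1
      have hAW : A r ⊆ B m₀ := by
        intro x hx
        rw [hWeq]
        exact Finset.mem_sdiff.mpr ⟨hAT r hx, by
          simp only [Finset.mem_singleton]; rintro rfl; exact htA hx⟩
      have hBW : B r ⊆ B m₀ := by
        intro x hx
        rw [hWeq]
        exact Finset.mem_sdiff.mpr ⟨hBT r hx, by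
          simp only [Finset.mem_singleton]; rintro rfl; exact htB hx⟩
      have hBr2 : 2 ≤ (B r).card := by
        have h1 := hoB r m₀ hrm
        rw [Finset.inter_eq_left.mpr hBW] at h1
        have := Finset.card_pos.mpr (hBne r)
        omega
      have hAr2 : (A r).card ≤ 2 := by
        have h1 : A r ∪ B r ⊆ B m₀ := Finset.union_subset hAW hBW
        have h2 := Finset.card_union_of_disjoint (hdisj r)
        have h3 := Finset.card_le_card h1
        rw [h2, hb4] at h3
        omega
      have hAS := hoA r i₀ hri
      have hASle : (A r ∩ A i₀).card ≤ 2 :=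
        le_trans (Finset.card_le_card Finset.inter_subset_left) hAr2
      have : (A r ∩ A i₀).card = 0 ∨ (A r ∩ A i₀).card = 2 := by omega
      rcases this with h0 | h2
      · left
        apply eq_singleton_of_subset _ (hAne r)
        intro x hx
        have hxS : x ∉ A i₀ := by
          intro hxS
          have : x ∈ A r ∩ A i₀ := Finset.mem_inter.mpr ⟨hx, hxS⟩
          rw [Finset.card_eq_zero.mp h0] at this
          exact absurd this (Finset.notMem_empty x)
        have : x ∈ T \ A i₀ := Finset.mem_sdiff.mpr ⟨hAT r hx, hxS⟩
        rw [hTS] at this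
        rcases Finset.mem_insert.mp this with rfl | h
        · exact absurd hx htA
        · exact h
      · right
        have heq : A r ∩ A i₀ = A r :=
          Finset.eq_of_subset_of_card_le Finset.inter_subset_left (by omega)
        constructor
        · rw [← heq]; exact Finset.inter_subset_right
        · have := congrArg Finset.card heq
          omega
    have key3 : ∀ r r', r ≠ r' → A r = {s} → A r' = {s} → False := by
      intro r r' hrr h1 h2
      have := hoA r r' hrr
      rw [h1, h2] at this
      simp at this
    have key4 : ∀ r r', r ≠ r' → A r ⊆ A i₀ → (A r).card = 2 → A r' ⊆ A i₀ →
        (A r').card = 2 → A r = A r' := by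
      intro r r' hrr ha1 hc1 ha2 hc2
      have hu : A r ∪ A r' ⊆ A i₀ := Finset.union_subset ha1 ha2
      have hcu : (A r ∪ A r').card ≤ 3 := hS ▸ Finset.card_le_card hu
      have := Finset.card_union_add_card_inter (A r) (A r')
      have hne1 := hoA r r' hrr
      have hge2 : 2 ≤ (A r ∩ A r').card := by omega
      have e1 : A r ∩ A r' = A r :=
        Finset.eq_of_subset_of_card_le Finset.inter_subset_left (by omega)
      have e2 : A r ∩ A r' = A r' :=
        Finset.eq_of_subset_of_card_le Finset.inter_subset_right (by omega)
      rw [← e1, e2]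
    have final : ∀ ra rb rc, ra ≠ rb → ra ≠ rc → rb ≠ rc →
        ({ra, rb, rc} : Finset ι) = {k1, k2, k3} →
        A ra = {s} → A rb ⊆ A i₀ → (A rb).card = 2 → A rc ⊆ A i₀ → (A rc).card = 2 →
        False := by
      intro ra rb rc hab hac hbc habc hAa hAb hcb hAc hcc
      have hra := hmem ra (by rw [← habc]; simp)
      have hrb := hmem rb (by rw [← habc]; simp)
      have heqbc := key4 rb rc hbc hAb hcb hAc hcc
      have hxcard : (A i₀ \ A rb).card = 1 := by
        rw [Finset.card_sdiff_of_subset hAb, hS, hcb]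
      obtain ⟨x, hx⟩ := Finset.card_eq_one.mp hxcard
      have hxS : x ∈ A i₀ ∧ x ∉ A rb := by
        have : x ∈ A i₀ \ A rb := hx ▸ Finset.mem_singleton_self x
        exact Finset.mem_sdiff.mp this
      have hxT : x ∈ T := hAT i₀ hxS.1
      have hresult := hc7A x hxT i₀ ?_
      · rw [hresult] at hS; simp at hS
      · intro l hl
        rcases hcover l with rfl | rfl | rfl | rfl | rfl
        · exact absurd rfl hl
        · rw [hAmt]
          simp only [Finset.mem_singleton]
          rintro rfl; exact htS hxS.1
        all_goals {
          have hlmem : (l = ra ∨ l = rb ∨ l = rc) := by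
            have : l ∈ ({ra, rb, rc} : Finset ι) := by rw [habc]; simp
            simpa using this
          rcases hlmem with rfl | rfl | rfl
          · rw [hAa]
            simp only [Finset.mem_singleton]
            rintro rfl; exact hsS hxS.1
          · exact hxS.2
          · rw [← heqbc]; exact hxS.2 }
    rcases key2 k1 hk1.1 hk1.2 with c1 | c1 <;>
      rcases key2 k2 hk2.1 hk2.2 with c2 | c2 <;>
        rcases key2 k3 hk3.1 hk3.2 with c3 | c3
    · exact key3 k1 k2 h12 c1 c2
    · exact key3 k1 k2 h12 c1 c2
    · exact key3 k1 k3 h13 c1 c3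
    · exact final k1 k2 k3 h12 h13 h23 rfl c1 c2.1 c2.2 c3.1 c3.2
    · exact key3 k2 k3 h23 c2 c3
    · exact final k2 k1 k3 h12.symm h23 h13 (by ext x; simp; tauto)
        c2 c1.1 c1.2 c3.1 c3.2
    · exact final k3 k1 k2 h13.symm h23.symm h12 (by ext x; simp; tauto)
        c3 c1.1 c1.2 c2.1 c2.2
    · have e12 := key4 k1 k2 h12 c1.1 c1.2 c2.1 c2.2
      have e13 := key4 k1 k3 h13 c1.1 c1.2 c3.1 c3.2
      exact three_sets_bound hallA (by rw [← c1.2]) h12 h13 h23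
        Finset.Subset.rfl (by rw [← e12]) (by rw [← e13])

end QLSCore

lemma supp_nonempty {v : ES} (hv : ‖v‖ = 1) : (supp v).Nonempty := by
  rw [Finset.nonempty_iff_ne_empty]
  intro hemp
  have hz : v = 0 := by
    refine PiLp.ext fun t => ?_
    show v t = 0
    by_contra hc
    have : t ∈ supp v := mem_supp.mpr hc
    rw [hemp] at this
    exact absurd this (Finset.notMem_empty t)
  rw [hz] at hv
  simp at hv

lemma supp_single (t : Fin 6) : supp (EuclideanSpace.single t (1:ℂ)) = {t} := by
  ext s
  by_cases hst : s = t <;> simp [mem_supp, EuclideanSpace.single_apply, hst]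

/-- If one of two orthogonal quantum Latin squares of order 6 in standard form has an
entry of weight three, then the other square has only entries of weight at most two in
that column. -/
theorem column_of_weight_three (Ψ Φ : Fin 6 → Fin 6 → EuclideanSpace ℂ (Fin 6))
    (hΨ : IsQLS Ψ) (hΦ : IsQLS Φ) (hO : OrthQLS Ψ Φ)
    (hsΨ : StdForm Ψ) (hsΦ : StdForm Φ)
    (i j : Fin 6) (h : weight (Ψ i j) = 3) :
    ∀ k, weight (Φ k j) ≤ 2 := by
  classical
  intro k
  by_contra hk2
  push_neg at hk2
  have hk3 : 3 ≤ (supp (Φ k j)).card := hk2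
  have hcolΨ : Orthonormal ℂ (fun r : Fin 6 => Ψ r j) := hΨ.2 j
  have hcolΦ : Orthonormal ℂ (fun r : Fin 6 => Φ r j) := hΦ.2 j
  have hzΨ : ∀ r : Fin 6, r ≠ 0 → Ψ r j j = 0 := by
    intro r hr
    have h0 : (inner ℂ (Ψ 0 j) (Ψ r j) : ℂ) = 0 := hcolΨ.2 (Ne.symm hr)
    rw [hsΨ j, inner_single_left] at h0
    exact h0
  have hzΦ : ∀ r : Fin 6, r ≠ 0 → Φ r j j = 0 := by
    intro r hr
    have h0 : (inner ℂ (Φ 0 j) (Φ r j) : ℂ) = 0 := hcolΦ.2 (Ne.symm hr)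
    rw [hsΦ j, inner_single_left] at h0
    exact h0
  have hdisjsupp : ∀ r : Fin 6, r ≠ 0 → ∀ t, Ψ r j t ≠ 0 → Φ r j t = 0 := by
    intro r hr t hpsi
    have hne : ((r, j) : Fin 6 × Fin 6) ≠ (0, t) := by
      intro hh
      exact hr (congrArg Prod.fst hh)
    have h0 := hO r j 0 t hne
    rw [hsΨ t, hsΦ t, inner_single_right, inner_single_right] at h0
    rcases mul_eq_zero.mp h0 with h' | h'
    · exact absurd (by simpa using h') hpsi
    · simpa using h'
  have hi0 : i ≠ 0 := by
    rintro rfl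
    rw [hsΨ j] at h
    have h1 : weight (EuclideanSpace.single j (1:ℂ)) = 1 := by
      show (supp _).card = 1
      rw [supp_single]
      simp
    omega
  have hk0 : k ≠ 0 := by
    rintro rfl
    rw [hsΦ j, supp_single] at hk3
    simp at hk3
  by_cases hki : k = i
  · subst hki
    have hsubS : supp (Ψ k j) ⊆ Finset.univ.erase j := by
      intro t ht
      refine Finset.mem_erase.mpr ⟨?_, Finset.mem_univ t⟩
      rintro rfl
      exact (mem_supp.mp ht) (hzΨ k hk0)
    have hsubΦ : supp (Φ k j) ⊆ (Finset.univ.erase j) \ supp (Ψ k j) := by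
      intro t ht
      refine Finset.mem_sdiff.mpr ⟨Finset.mem_erase.mpr ⟨?_, Finset.mem_univ t⟩, ?_⟩
      · rintro rfl
        exact (mem_supp.mp ht) (hzΦ k hk0)
      · intro hts
        exact (mem_supp.mp ht) (hdisjsupp k hk0 t (mem_supp.mp hts))
    have hcard := Finset.card_le_card hsubΦ
    rw [Finset.card_sdiff_of_subset hsubS] at hcard
    have h5 : (Finset.univ.erase j : Finset (Fin 6)).card = 5 := by simp
    have hw3 : (supp (Ψ k j)).card = 3 := h
    omega
  · refine QLSCore.core (ι := {x : Fin 6 // x ≠ 0}) (by simp) (Finset.univ.erase j)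
      (by simp) (fun r => supp (Ψ r.1 j)) (fun r => supp (Φ r.1 j)) ⟨i, hi0⟩ ⟨k, hk0⟩
      (fun hh => hki (congrArg Subtype.val hh).symm) ?_ ?_ ?_ ?_ ?_ ?_ ?_ ?_ ?_ ?_ ?_ h hk3
    · intro r t ht
      refine Finset.mem_erase.mpr ⟨?_, Finset.mem_univ t⟩
      rintro rfl
      exact (mem_supp.mp ht) (hzΨ r.1 r.2)
    · intro r t ht
      refine Finset.mem_erase.mpr ⟨?_, Finset.mem_univ t⟩
      rintro rfl
      exact (mem_supp.mp ht) (hzΦ r.1 r.2)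
    · exact fun r => supp_nonempty (hcolΨ.1 r.1)
    · exact fun r => supp_nonempty (hcolΦ.1 r.1)
    · intro r
      rw [Finset.disjoint_left]
      intro t ht1 ht2
      exact (mem_supp.mp ht2) (hdisjsupp r.1 r.2 t (mem_supp.mp ht1))
    · intro r l hrl
      exact orth_card_ne_one (hcolΨ.2 (fun hh => hrl (Subtype.ext hh)))
    · intro r l hrl
      exact orth_card_ne_one (hcolΦ.2 (fun hh => hrl (Subtype.ext hh)))
    · intro t htT r hz
      refine c7_lemma hcolΨ t r.1 ?_
      intro l hl
      by_cases hl0 : l = 0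
      · subst hl0
        rw [hsΨ j]
        have htj : t ≠ j := (Finset.mem_erase.mp htT).1
        simp [EuclideanSpace.single_apply, htj]
      · have hns := hz ⟨l, hl0⟩ (fun hh => hl (congrArg Subtype.val hh))
        by_contra hc
        exact hns (mem_supp.mpr hc)
    · intro t htT r hz
      refine c7_lemma hcolΦ t r.1 ?_
      intro l hl
      by_cases hl0 : l = 0
      · subst hl0
        rw [hsΦ j]
        have htj : t ≠ j := (Finset.mem_erase.mp htT).1
        simp [EuclideanSpace.single_apply, htj]
      · have hns := hz ⟨l, hl0⟩ (fun hh => hl (congrArg Subtype.val hh))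
        by_contra hc
        exact hns (mem_supp.mpr hc)
    · exact fun P => hall_bound (hcolΨ.comp Subtype.val Subtype.val_injective) P
    · exact fun P => hall_bound (hcolΦ.comp Subtype.val Subtype.val_injective) P
end
end

section
/- Let A be a classical Latin square of order 6 having a subsquare of order three with row set R, column set C and symbol set S, let Ψ be the quantum Latin square of order 6 whose (i,j) entry is the standard basis vector e_{A(i,j)} of ℂ^6, and let Φ be a quantum Latin square of order 6 orthogonal to Ψ. Then the nine entries Φ_{ij} with i ∈ R, j ∈ C are pairwise non-parallel: for distinct cells (i,j) ≠ (k,l) in R×C, Φ_{ij} is not a scalar multiple of Φ_{kl}. -/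
noncomputable section

/-- A classical Latin square of order `n`: every row and every column is a bijection. -/
def IsLatin {n : ℕ} (A : Fin n → Fin n → Fin n) : Prop :=
  (∀ i, Function.Bijective (A i)) ∧ (∀ j, Function.Bijective fun i => A i j)

set_option maxHeartbeats 1000000 in
lemma parseval6 (v : Fin 6 → EuclideanSpace ℂ (Fin 6)) (hv : Orthonormal ℂ v)
    (u : EuclideanSpace ℂ (Fin 6)) :
    ∑ p : Fin 6, ‖(inner ℂ u (v p) : ℂ)‖ ^ 2 = ‖u‖ ^ 2 := by
  have hcard : Fintype.card (Fin 6) = Module.finrank ℂ (EuclideanSpace ℂ (Fin 6)) := by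
    rw [finrank_euclideanSpace_fin, Fintype.card_fin]
  have hspan : ⊤ ≤ Submodule.span ℂ (Set.range v) := by
    rw [← coe_basisOfLinearIndependentOfCardEqFinrank hv.linearIndependent hcard, Module.Basis.span_eq]
  let b : OrthonormalBasis (Fin 6) ℂ (EuclideanSpace ℂ (Fin 6)) := OrthonormalBasis.mk hv hspan
  have hparse := b.sum_inner_mul_inner u u
  have hb' : ∀ p, b p = v p := fun p => by simp [b, OrthonormalBasis.coe_mk]
  simp only [hb'] at hparse
  have : ∀ p : Fin 6, (inner ℂ u (v p) : ℂ) * (inner ℂ (v p) u : ℂ)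
      = ((‖(inner ℂ u (v p) : ℂ)‖ ^ 2 : ℝ) : ℂ) := by
    intro p
    rw [← inner_conj_symm (v p) u, Complex.mul_conj]
    norm_cast
    rw [Complex.normSq_eq_norm_sq]
  rw [Finset.sum_congr rfl (fun p _ => this p), inner_self_eq_norm_sq_to_K] at hparse
  exact Complex.ofReal_injective (by push_cast at hparse ⊢; exact hparse)

set_option maxHeartbeats 1000000 in
/-- If a classical Latin square `A` of order 6 has a subsquare of order three with row
set `R`, column set `C` and symbol set `S`, and `Φ` is a quantum Latin square of order 6
orthogonal to the classical quantum Latin square determined by `A`, then the nine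
entries of `Φ` in the block `R × C` are pairwise non-parallel. -/
theorem subsquare_entries_nonparallel
    (A : Fin 6 → Fin 6 → Fin 6) (hA : IsLatin A)
    (R C S : Finset (Fin 6)) (hR : R.card = 3) (hC : C.card = 3) (hS : S.card = 3)
    (hsub : ∀ i ∈ R, ∀ j ∈ C, A i j ∈ S)
    (Ψ Φ : Fin 6 → Fin 6 → EuclideanSpace ℂ (Fin 6))
    (hΨdef : ∀ i j, Ψ i j = EuclideanSpace.single (A i j) (1 : ℂ))
    (hΦ : IsQLS Φ) (hO : OrthQLS Ψ Φ) :
    ∀ i ∈ R, ∀ j ∈ C, ∀ k ∈ R, ∀ l ∈ C, (i, j) ≠ (k, l) →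
      ∀ c : ℂ, Φ i j ≠ c • Φ k l := by
  classical
  obtain ⟨hrow, hcol⟩ := hΦ
  have hn : ∀ p q, ‖Φ p q‖ = 1 := fun p q => (hrow p).1 q
  -- entries at cells with identical symbol are orthogonal
  have horthΦ : ∀ p q p' q', (p, q) ≠ (p', q') → A p q = A p' q' →
      (inner ℂ (Φ p q) (Φ p' q') : ℂ) = 0 := by
    intro p q p' q' hne hsym
    have h0 := hO p q p' q' hne
    have h1 : (inner ℂ (Ψ p q) (Ψ p' q') : ℂ) = 1 := by
      rw [hΨdef, hΨdef, hsym]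
      simp [EuclideanSpace.inner_single_left, EuclideanSpace.single_apply]
    rw [h1, one_mul] at h0
    exact h0
  intro i hi j hj k hk l hl hne c hc
  -- c ≠ 0
  have hc0 : c ≠ 0 := by
    rintro rfl
    rw [zero_smul] at hc
    have := hn i j
    rw [hc, norm_zero] at this
    exact zero_ne_one this
  have hcc : (starRingEnd ℂ) c ≠ 0 := by simpa using hc0
  -- inner of the two parallel entries
  have hinner : (inner ℂ (Φ i j) (Φ k l) : ℂ) = (starRingEnd ℂ) c := by
    rw [hc, inner_smul_left, inner_self_eq_norm_sq_to_K, hn k l]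
    norm_num
  -- degenerate cases: same row or same column
  have hik : i ≠ k := by
    rintro rfl
    have hjl : j ≠ l := by rintro rfl; exact hne rfl
    have := (hrow i).2 hjl
    simp only at this
    rw [hinner] at this
    exact hcc this
  have hjl : j ≠ l := by
    rintro rfl
    have := (hcol j).2 hik
    simp only at this
    rw [hinner] at this
    exact hcc this
  -- symbols
  set s₁ := A i j with hs₁
  set s₂ := A i l with hs₂
  set s₃ := A k l with hs₃
  have h13 : s₁ ≠ s₃ := by
    intro h
    have := horthΦ i j k l hne h
    rw [hinner] at this
    exact hcc this
  have h12 : s₁ ≠ s₂ := fun h => hjl ((hA.1 i).1 h)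
  have h23 : s₂ ≠ s₃ := fun h => hik ((hA.2 l).1 h)
  have hSset : S = {s₁, s₂, s₃} := by
    refine (Finset.eq_of_subset_of_card_le ?_ ?_).symm
    · intro x hx
      simp only [Finset.mem_insert, Finset.mem_singleton] at hx
      rcases hx with rfl | rfl | rfl
      · exact hsub i hi j hj
      · exact hsub i hi l hl
      · exact hsub k hk l hl
    · rw [hS]
      rw [Finset.card_insert_of_notMem (by simp [h12, h13]),
        Finset.card_insert_of_notMem (by simp [h23]), Finset.card_singleton]
  -- complementary subsquare: outside rows/columns carry symbols of S
  have hcolS : ∀ q ∈ C, ∀ p, p ∉ R → A p q ∉ S := by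
    intro q hq p hp hmem
    have himg : R.image (fun p => A p q) = S := by
      apply Finset.eq_of_subset_of_card_le
      · intro x hx
        obtain ⟨p', hp', rfl⟩ := Finset.mem_image.mp hx
        exact hsub p' hp' q hq
      · rw [Finset.card_image_of_injective _ (hA.2 q).1, hR, hS]
    rw [← himg] at hmem
    obtain ⟨p', hp', hp'e⟩ := Finset.mem_image.mp hmem
    exact hp (((hA.2 q).1 hp'e) ▸ hp')
  have hcomp : ∀ p, p ∉ R → ∀ q, q ∉ C → A p q ∈ S := by
    intro p hp q hq
    have himg : S = (Finset.univ \ C).image (A p) := by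
      apply Finset.eq_of_subset_of_card_le
      · intro s hs
        obtain ⟨q', hq'⟩ := (hA.1 p).2 s
        refine Finset.mem_image.mpr ⟨q', ?_, hq'⟩
        simp only [Finset.mem_sdiff, Finset.mem_univ, true_and]
        intro hq'C
        exact hcolS q' hq'C p hp (hq' ▸ hs)
      · rw [Finset.card_image_of_injective _ (hA.1 p).1, hS,
          Finset.card_sdiff_of_subset (Finset.subset_univ _), hC]
        simp
    rw [himg]
    exact Finset.mem_image.mpr ⟨q, by simp [hq], rfl⟩
  -- the scalar field
  set u := Φ k l with hu
  set f : Fin 6 → Fin 6 → ℝ := fun p q => ‖(inner ℂ u (Φ p q) : ℂ)‖ ^ 2 with hf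
  have hf0 : ∀ p q, 0 ≤ f p q := fun p q => by positivity
  -- conversion: inner ℂ (Φ p q) u = 0 → f p q = 0
  have hfz : ∀ p q, (inner ℂ (Φ p q) u : ℂ) = 0 → f p q = 0 := by
    intro p q h
    have : (inner ℂ u (Φ p q) : ℂ) = 0 := by
      rw [← inner_conj_symm, h, map_zero]
    show ‖(inner ℂ u (Φ p q) : ℂ)‖ ^ 2 = 0
    rw [this, norm_zero]
    norm_num
  -- zero facts
  have hZ1 : ∀ q, q ≠ j → f i q = 0 := by
    intro q hq
    apply hfz
    have h1 : (inner ℂ (Φ i q) (Φ i j) : ℂ) = 0 := (hrow i).2 hq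
    rw [hc, inner_smul_right] at h1
    exact (mul_eq_zero.mp h1).resolve_left hc0
  have hZ2 : ∀ q, q ≠ l → f k q = 0 := by
    intro q hq
    exact hfz k q ((hrow k).2 hq)
  have hZ5 : ∀ p q, A p q = s₁ → (p, q) ≠ (i, j) → f p q = 0 := by
    intro p q hpq hne'
    apply hfz
    have h1 : (inner ℂ (Φ p q) (Φ i j) : ℂ) = 0 := horthΦ p q i j hne' hpq
    rw [hc, inner_smul_right] at h1
    exact (mul_eq_zero.mp h1).resolve_left hc0
  have hZ6 : ∀ p q, A p q = s₃ → (p, q) ≠ (k, l) → f p q = 0 := by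
    intro p q hpq hne'
    exact hfz p q (horthΦ p q k l hne' hpq)
  -- the row of s₂ in each column
  have hex : ∀ q, ∃ p, A p q = s₂ := fun q => (hA.2 q).2 s₂
  choose ρ hρ using hex
  have honb₂ : Orthonormal ℂ (fun q => Φ (ρ q) q) := by
    constructor
    · exact fun q => hn _ _
    · intro q q' hqq'
      exact horthΦ _ _ _ _ (by simp [hqq']) ((hρ q).trans (hρ q').symm)
  -- Parseval sums
  have hnu : ‖u‖ = 1 := hn k l
  have hrowsum : ∀ p, ∑ q, f p q = 1 := by
    intro p
    have := parseval6 (fun q => Φ p q) (hrow p) u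
    rw [hnu] at this
    simpa [hf] using this
  have hcolsum : ∀ q, ∑ p, f p q = 1 := by
    intro q
    have := parseval6 (fun p => Φ p q) (hcol q) u
    rw [hnu] at this
    simpa [hf] using this
  have hs2sum : ∑ q, f (ρ q) q = 1 := by
    have := parseval6 (fun q => Φ (ρ q) q) honb₂ u
    rw [hnu] at this
    simpa [hf] using this
  -- pointwise bound on columns outside C
  have hpoint : ∀ q, q ∉ C → ∀ p, f p q ≤
      (if p ∈ R \ ({i, k} : Finset (Fin 6)) then f p q else 0) +
      (if p = ρ q then f p q else 0) := by
    intro q hq p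
    by_cases h1 : p ∈ R \ ({i, k} : Finset (Fin 6))
    · rw [if_pos h1]
      have : (0:ℝ) ≤ if p = ρ q then f p q else 0 := by
        split_ifs <;> simp [hf0]
      linarith
    by_cases h2 : p = ρ q
    · rw [if_neg h1, if_pos h2]
      simp [hf0]
    rw [if_neg h1, if_neg h2, add_zero]
    -- show f p q = 0
    have hzero : f p q = 0 := by
      by_cases hpi : p = i
      · exact hpi ▸ hZ1 q (fun h => hq (h ▸ hj))
      by_cases hpk : p = k
      · exact hpk ▸ hZ2 q (fun h => hq (h ▸ hl))
      by_cases hpR : p ∈ R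
      · exact absurd (Finset.mem_sdiff.mpr ⟨hpR, by simp [hpi, hpk]⟩) h1
      have hmem := hcomp p hpR q hq
      rw [hSset] at hmem
      simp only [Finset.mem_insert, Finset.mem_singleton] at hmem
      rcases hmem with h | h | h
      · exact hZ5 p q h (by simp [hpi])
      · exact absurd ((hA.2 q).1 (h.trans (hρ q).symm)) h2
      · exact hZ6 p q h (by simp [hpk])
    rw [hzero]
  -- the contradiction
  exfalso
  have hcard1 : (R \ ({i, k} : Finset (Fin 6))).card = 1 := by
    rw [Finset.card_sdiff_of_subset (by
      intro x hx; simp only [Finset.mem_insert, Finset.mem_singleton] at hx; rcases hx with rfl | rfl <;> assumption), hR,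
      Finset.card_insert_of_notMem (by simp [hik]), Finset.card_singleton]
  have h3 : ∑ q ∈ Finset.univ \ C, ∑ p, f p q = 3 := by
    rw [Finset.sum_congr rfl fun q _ => hcolsum q, Finset.sum_const,
      Finset.card_sdiff_of_subset (Finset.subset_univ _), hC]
    simp
  have hb1 : ∑ q ∈ Finset.univ \ C, ∑ p, f p q ≤
      ∑ q ∈ Finset.univ \ C, ((∑ p ∈ R \ ({i, k} : Finset (Fin 6)), f p q) + f (ρ q) q) := by
    apply Finset.sum_le_sum
    intro q hq
    have hqC : q ∉ C := (Finset.mem_sdiff.mp hq).2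
    calc ∑ p, f p q ≤ ∑ p, ((if p ∈ R \ ({i, k} : Finset (Fin 6)) then f p q else 0) +
          (if p = ρ q then f p q else 0)) := Finset.sum_le_sum fun p _ => hpoint q hqC p
      _ = (∑ p ∈ R \ ({i, k} : Finset (Fin 6)), f p q) + f (ρ q) q := by
          rw [Finset.sum_add_distrib]
          congr 1
          · rw [Finset.sum_ite_mem, Finset.univ_inter]
          · rw [Finset.sum_ite_eq', if_pos (Finset.mem_univ _)]
  have hb2 : ∑ q ∈ Finset.univ \ C, ((∑ p ∈ R \ ({i, k} : Finset (Fin 6)), f p q)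
      + f (ρ q) q) ≤ 2 := by
    rw [Finset.sum_add_distrib]
    have e1 : ∑ q ∈ Finset.univ \ C, ∑ p ∈ R \ ({i, k} : Finset (Fin 6)), f p q ≤ 1 := by
      rw [Finset.sum_comm]
      calc ∑ p ∈ R \ ({i, k} : Finset (Fin 6)), ∑ q ∈ Finset.univ \ C, f p q
          ≤ ∑ p ∈ R \ ({i, k} : Finset (Fin 6)), ∑ q, f p q := by
            apply Finset.sum_le_sum
            intro p _
            exact Finset.sum_le_sum_of_subset_of_nonneg (Finset.subset_univ _)
              (fun q _ _ => hf0 p q)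
        _ = 1 := by
            rw [Finset.sum_congr rfl fun p _ => hrowsum p, Finset.sum_const, hcard1]
            simp
    have e2 : ∑ q ∈ Finset.univ \ C, f (ρ q) q ≤ 1 := by
      calc ∑ q ∈ Finset.univ \ C, f (ρ q) q ≤ ∑ q, f (ρ q) q :=
            Finset.sum_le_sum_of_subset_of_nonneg (Finset.subset_univ _)
              (fun q _ _ => hf0 _ q)
        _ = 1 := hs2sum
    linarith
  linarith
end
end

section
/- There exists a pair of orthogonal quantum Latin squares Ψ, Φ of order 9 such that every entry of Ψ is a standard basis vector of ℂ^9 (Ψ is classical), while Φ is not classical: there do not exist a unitary transformation U of ℂ^9 and unit scalars λ_{ij} ∈ ℂ such that every λ_{ij}·U(Φ_{ij}) is a standard basis vector of ℂ^9. -/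
noncomputable section

/- ### Auxiliary construction.

We build the pair of orthogonal quantum Latin squares of order 9 over the index group
`Gp = ℤ/3 × ℤ/3`.  The classical square is `Ψ_{ij} = e_{i+j}`.  The other square is
based on the classical square `e_{i-j}`, modified on the cells where `i - j ∈ {0, b}`
(`b = (1,0)`): on those cells, the entries `e_0, e_b` are rotated, inside their
2-dimensional span, by the rotation with matrix `(3/5, 4/5; -4/5, 3/5)` — but only when
the second coordinate of `j` is `0`.  The integer-coefficient function `coef` records
`5` times the coordinates of each entry. -/

abbrev Gp := ZMod 3 × ZMod 3

def bvec : Gp := (1, 0)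
def cc (y : ZMod 3) : ℤ := if y = 0 then 3 else 5
def ss (y : ZMod 3) : ℤ := if y = 0 then 4 else 0

/-- `5` times the coordinates (in the standard basis indexed by `Gp`) of the entry at
cell `(i,j)` of the non-classical quantum Latin square. -/
def coef (i j g : Gp) : ℤ :=
  if i = j then (if g = 0 then cc j.2 else if g = bvec then ss j.2 else 0)
  else if i = j + bvec then (if g = 0 then - ss j.2 else if g = bvec then cc j.2 else 0)
  else if g = i - j then 5 else 0

set_option maxRecDepth 10000 in
lemma P1 : ∀ i j : Gp, (∑ g : Gp, coef i j g * coef i j g) = 25 := by decide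

set_option maxRecDepth 100000 in
lemma P2 : ∀ i j k l : Gp, (i = k ∨ j = l ∨ i + j = k + l) → ¬(i = k ∧ j = l) →
    (∑ g : Gp, coef i j g * coef k l g) = 0 := by decide

def gidx : Gp ≃ Fin 9 := Fintype.equivFinOfCardEq (by decide)

def evec (g : Gp) : EuclideanSpace ℂ (Fin 9) := EuclideanSpace.single (gidx g) 1

lemma inner_evec (g h : Gp) : (inner ℂ (evec g) (evec h) : ℂ) = if g = h then 1 else 0 := by
  simp [evec, EuclideanSpace.inner_single_left, EuclideanSpace.single_apply,
    EmbeddingLike.apply_eq_iff_eq, eq_comm]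

/-- The non-classical quantum Latin square, indexed by `Gp`. -/
def PhiG (i j : Gp) : EuclideanSpace ℂ (Fin 9) := ∑ g : Gp, ((coef i j g : ℂ) / 5) • evec g

/-- The classical quantum Latin square, indexed by `Gp`. -/
def PsiG (i j : Gp) : EuclideanSpace ℂ (Fin 9) := evec (i + j)

lemma inner_PhiG (i j k l : Gp) :
    (inner ℂ (PhiG i j) (PhiG k l) : ℂ) = ((∑ g : Gp, coef i j g * coef k l g : ℤ) : ℂ) / 25 := by
  simp only [PhiG, sum_inner, inner_sum, inner_smul_left, inner_smul_right, inner_evec,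
    mul_ite, mul_one, mul_zero, Finset.sum_ite_eq, Finset.sum_ite_eq', Finset.mem_univ, if_true]
  push_cast
  rw [Finset.sum_div]
  refine Finset.sum_congr rfl fun g _ => ?_
  simp only [map_div₀, map_intCast, map_ofNat]
  ring

lemma inner_PsiG (i j k l : Gp) :
    (inner ℂ (PsiG i j) (PsiG k l) : ℂ) = if i + j = k + l then 1 else 0 := by
  unfold PsiG; rw [inner_evec]

/-- There exist two orthogonal quantum Latin squares of order 9 such that one of them is
classical (all entries standard basis vectors) while the other is not classical: no
unitary of `ℂ^9` together with unit scalar factors turns all its entries into standard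
basis vectors. -/
theorem exists_two_MOQLS_nine_one_classical_one_not :
    ∃ Ψ Φ : Fin 9 → Fin 9 → EuclideanSpace ℂ (Fin 9),
      IsQLS Ψ ∧ IsQLS Φ ∧ OrthQLS Ψ Φ ∧
      (∀ i j, ∃ k, Ψ i j = EuclideanSpace.single k (1 : ℂ)) ∧
      ¬ ∃ (U : EuclideanSpace ℂ (Fin 9) ≃ₗᵢ[ℂ] EuclideanSpace ℂ (Fin 9))
          (lam : Fin 9 → Fin 9 → ℂ),
          (∀ i j, ‖lam i j‖ = 1) ∧
          (∀ i j, ∃ k, lam i j • U (Φ i j) = EuclideanSpace.single k (1 : ℂ)) := by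
  refine ⟨fun i j => PsiG (gidx.symm i) (gidx.symm j),
          fun i j => PhiG (gidx.symm i) (gidx.symm j), ⟨?_, ?_⟩, ⟨?_, ?_⟩, ?_, ?_, ?_⟩
  · -- rows of Ψ
    intro i
    rw [orthonormal_iff_ite]
    intro j l
    rw [inner_PsiG]
    simp [EmbeddingLike.apply_eq_iff_eq]
  · -- columns of Ψ
    intro j
    rw [orthonormal_iff_ite]
    intro i k
    rw [inner_PsiG]
    simp [EmbeddingLike.apply_eq_iff_eq]
  · -- rows of Φ
    intro i
    rw [orthonormal_iff_ite]
    intro j l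
    rw [inner_PhiG]
    by_cases h : j = l
    · subst h; simp [P1]
    · rw [P2 _ _ _ _ (Or.inl rfl) (by simp [EmbeddingLike.apply_eq_iff_eq, h])]
      simp [h]
  · -- columns of Φ
    intro j
    rw [orthonormal_iff_ite]
    intro i k
    rw [inner_PhiG]
    by_cases h : i = k
    · subst h; simp [P1]
    · rw [P2 _ _ _ _ (Or.inr (Or.inl rfl)) (by simp [EmbeddingLike.apply_eq_iff_eq, h])]
      simp [h]
  · -- orthogonality
    intro i j k l hne
    rw [inner_PsiG]
    by_cases hs : gidx.symm i + gidx.symm j = gidx.symm k + gidx.symm l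
    · rw [inner_PhiG, P2 _ _ _ _ (Or.inr (Or.inr hs))
        (by
          rintro ⟨h1, h2⟩
          exact hne (Prod.ext (gidx.symm.injective h1) (gidx.symm.injective h2)))]
      simp
    · simp [hs]
  · -- Ψ is classical
    intro i j
    exact ⟨gidx (gidx.symm i + gidx.symm j), rfl⟩
  · -- Φ is not classical
    rintro ⟨U, lam, hnorm, hcl⟩
    set p : Fin 9 := gidx ((0 : ZMod 3), (0 : ZMod 3)) with hp
    set q : Fin 9 := gidx ((0 : ZMod 3), (1 : ZMod 3)) with hq
    obtain ⟨k1, h1⟩ := hcl p p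
    obtain ⟨k2, h2⟩ := hcl q q
    have hPp : PhiG (gidx.symm p) (gidx.symm p) = PhiG (0, 0) (0, 0) := by
      rw [hp, Equiv.symm_apply_apply]
    have hPq : PhiG (gidx.symm q) (gidx.symm q) = PhiG (0, 1) (0, 1) := by
      rw [hq, Equiv.symm_apply_apply]
    beta_reduce at h1 h2
    rw [hPq] at h2
    rw [hPp] at h1
    have hip : (inner ℂ (PhiG ((0 : ZMod 3), (1 : ZMod 3)) (0, 1)) (PhiG (0, 0) (0, 0)) : ℂ)
        = 3 / 5 := by
      rw [inner_PhiG,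
        show (∑ g : Gp, coef (0, 1) (0, 1) g * coef (0, 0) (0, 0) g) = 15 from by decide]
      norm_num
    have key : (inner ℂ (EuclideanSpace.single k2 (1 : ℂ)) (EuclideanSpace.single k1 (1 : ℂ)) : ℂ)
        = (starRingEnd ℂ) (lam q q) * lam p p * (3 / 5) := by
      rw [← h1, ← h2, inner_smul_left, inner_smul_right, LinearIsometryEquiv.inner_map_map, hip]
      ring
    have hlhs : ‖(inner ℂ (EuclideanSpace.single k2 (1 : ℂ))
        (EuclideanSpace.single k1 (1 : ℂ)) : ℂ)‖ = if k2 = k1 then 1 else 0 := by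
      rw [EuclideanSpace.inner_single_left, EuclideanSpace.single_apply]
      by_cases h : k2 = k1 <;> simp [h, eq_comm]
    have hrhs : ‖(starRingEnd ℂ) (lam q q) * lam p p * ((3 : ℂ) / 5)‖ = 3 / 5 := by
      rw [norm_mul, norm_mul, RCLike.norm_conj, hnorm, hnorm]
      norm_num
    rw [key, hrhs] at hlhs
    by_cases h : k2 = k1 <;> norm_num [h] at hlhs
end
end
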